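/- arXiv:1805.02746 — 2 statements merged into one kernel-verified Lean document; each statement's English description precedes it below -/
import Mathlib

section
/- For nonempty regular families ℱ and 𝒢 of finite subsets of ℕ, the family ℱ[𝒢] = {∅} ∪ {E₁ ∪ ⋯ ∪ Eₙ : ∅ ≠ Eᵢ ∈ 𝒢, E₁ < ⋯ < Eₙ, (min E₁, …, min Eₙ) ∈ ℱ} is regular; moreover if CB(ℱ) = β+1 and CB(𝒢) = α+1 then CB(ℱ[𝒢]) = α·β + 1. -/
/-- Identify a finite subset of `ℕ` with a point of the Cantor space `ℕ → Bool`. -/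
def toCantor (F : Finset ℕ) : ℕ → Bool := fun n => decide (n ∈ F)

/-- Hereditary: closed under subsets. -/
def Hereditary (G : Set (Finset ℕ)) : Prop := ∀ ⦃E F : Finset ℕ⦄, E ⊆ F → F ∈ G → E ∈ G

/-- Spreading: closed under replacing elements by larger ones, keeping the
increasing order and the cardinality. -/
def Spreading (G : Set (Finset ℕ)) : Prop :=
  ∀ (E : Finset ℕ) (f : ℕ → ℕ), StrictMonoOn f ↑E → (∀ n ∈ E, n ≤ f n) →
    E ∈ G → E.image f ∈ G

/-- Regular: compact (in the Cantor topology), hereditary and spreading. -/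
def IsRegularFam (G : Set (Finset ℕ)) : Prop :=
  IsCompact (toCantor '' G) ∧ Hereditary G ∧ Spreading G

/-- The Cantor–Bendixson derivative. -/
def cbDeriv {α : Type*} [TopologicalSpace α] (K : Set α) : Set α :=
  {x | x ∈ K ∧ x ∈ closure (K \ {x})}

/-- Transfinite Cantor–Bendixson iterates. -/
noncomputable def cbIter {α : Type*} [TopologicalSpace α] (K : Set α) (ξ : Ordinal) : Set α :=
  Ordinal.limitRecOn ξ K (fun _ S => cbDeriv S)
    (fun o _ ih => ⋂ (ζ : Ordinal) (h : ζ < o), ih ζ h)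

/-- The family `ℱ[𝒢]`, consisting of `∅` together with all unions
`E₁ ∪ ⋯ ∪ Eₙ` where `∅ ≠ Eᵢ ∈ 𝒢`, `E₁ < ⋯ < Eₙ` and `(min E₁, …, min Eₙ) ∈ ℱ`. -/
def famComb (F G : Set (Finset ℕ)) : Set (Finset ℕ) :=
  {∅} ∪ {E | ∃ (n : ℕ) (Es : Fin n → Finset ℕ) (mins : Fin n → ℕ),
    (∀ i, Es i ∈ G ∧ (Es i).Nonempty) ∧
    (∀ i j : Fin n, i < j → ∀ a ∈ Es i, ∀ b ∈ Es j, a < b) ∧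
    (∀ i, IsLeast (↑(Es i) : Set ℕ) (mins i)) ∧
    Finset.univ.image mins ∈ F ∧
    E = Finset.univ.biUnion Es}



/-- truncation of a point of Cantor space -/
def trunc (x : ℕ → Bool) (N : ℕ) : Finset ℕ := (Finset.range N).filter (fun n => x n = true)

lemma mem_trunc {x : ℕ → Bool} {N i : ℕ} : i ∈ trunc x N ↔ i < N ∧ x i = true := by
  simp [trunc]

lemma toCantor_injective : Function.Injective toCantor := by
  intro E F h
  ext n
  have := congrFun h n
  simpa [toCantor] using this

lemma trunc_toCantor (E : Finset ℕ) (N : ℕ) : trunc (toCantor E) N = E.filter (· < N) := by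
  ext i; simp [mem_trunc, toCantor, and_comm]

lemma trunc_toCantor_of_le {E : Finset ℕ} {N : ℕ} (h : ∀ i ∈ E, i < N) :
    trunc (toCantor E) N = E := by
  rw [trunc_toCantor]
  exact Finset.filter_true_of_mem h

lemma cylinder_isOpen (x : ℕ → Bool) (N : ℕ) : IsOpen {y : ℕ → Bool | ∀ i < N, y i = x i} := by
  have : {y : ℕ → Bool | ∀ i < N, y i = x i} = ⋂ i ∈ Finset.range N, (fun y : ℕ → Bool => y i) ⁻¹' {x i} := by
    ext y; simp
  rw [this]
  exact isOpen_biInter_finset fun i _ => (continuous_apply i).isOpen_preimage _ (isOpen_discrete _)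

lemma mem_closure_iff_trunc {S : Set (ℕ → Bool)} {x : ℕ → Bool} :
    x ∈ closure S ↔ ∀ N, ∃ y ∈ S, ∀ i < N, y i = x i := by
  constructor
  · intro hx N
    have := mem_closure_iff.mp hx _ (cylinder_isOpen x N) (fun i _ => rfl)
    obtain ⟨y, hy1, hy2⟩ := this
    exact ⟨y, hy2, hy1⟩
  · intro h
    rw [mem_closure_iff]
    intro o ho hxo
    obtain ⟨I, u, hu, hsub⟩ := isOpen_pi_iff.mp ho x hxo
    obtain ⟨y, hyS, hy⟩ := h (if h : I.Nonempty then I.max' h + 1 else 0)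
    refine ⟨y, hsub ?_, hyS⟩
    intro i hi
    have hiI : (i : ℕ) ∈ I := hi
    have : y i = x i := by
      apply hy
      split
      · next hne => exact Nat.lt_succ_of_le (Finset.le_max' _ _ hiI)
      · next hne => exact absurd ⟨i, hiI⟩ hne
    rw [this]
    exact (hu i hiI).2

lemma mem_closure_image_iff {H : Set (Finset ℕ)} (hH : Hereditary H) {x : ℕ → Bool} :
    x ∈ closure (toCantor '' H) ↔ ∀ N, trunc x N ∈ H := by
  rw [mem_closure_iff_trunc]
  constructor
  · intro h N
    obtain ⟨y, ⟨E, hE, rfl⟩, hagree⟩ := h N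
    have : trunc x N = E.filter (· < N) := by
      ext i
      simp only [mem_trunc, Finset.mem_filter]
      constructor
      · rintro ⟨hiN, hxi⟩
        have h2 := hagree i hiN
        rw [hxi] at h2
        simp only [toCantor, decide_eq_true_eq] at h2
        exact ⟨h2, hiN⟩
      · rintro ⟨hiE, hiN⟩
        refine ⟨hiN, ?_⟩
        rw [← hagree i hiN]
        simp [toCantor, hiE]
    rw [this]
    exact hH (Finset.filter_subset _ _) hE
  · intro h N
    refine ⟨toCantor (trunc x N), ⟨_, h N, rfl⟩, ?_⟩
    intro i hiN
    simp only [toCantor, mem_trunc, hiN, true_and, decide_eq_true_eq]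
    cases hxi : x i <;> simp

lemma isCompact_image_iff {H : Set (Finset ℕ)} (hH : Hereditary H) :
    IsCompact (toCantor '' H) ↔
      ∀ x : ℕ → Bool, (∀ N, trunc x N ∈ H) → {n | x n = true}.Finite := by
  constructor
  · intro hc x hx
    have hcl : IsClosed (toCantor '' H) := hc.isClosed
    have : x ∈ toCantor '' H := by
      rw [← hcl.closure_eq]
      exact (mem_closure_image_iff hH).mpr hx
    obtain ⟨E, _, rfl⟩ := this
    have : {n | toCantor E n = true} = ↑E := by ext n; simp [toCantor]
    rw [this]; exact E.finite_toSet
  · intro h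
    have hcl : IsClosed (toCantor '' H) := by
      rw [← closure_subset_iff_isClosed]
      intro x hx
      have htr := (mem_closure_image_iff hH).mp hx
      have hfin : {n | x n = true}.Finite := h x htr
      refine ⟨hfin.toFinset, ?_, ?_⟩
      · obtain ⟨N, hN⟩ : ∃ N, ∀ n ∈ hfin.toFinset, n < N := by
          rcases hfin.toFinset.exists_le with ⟨N, hN⟩
          exact ⟨N + 1, fun n hn => Nat.lt_succ_of_le (hN n hn)⟩
        have : hfin.toFinset = trunc x N := by
          ext i
          simp only [Set.Finite.mem_toFinset, Set.mem_setOf_eq, mem_trunc]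
          constructor
          · intro hi
            exact ⟨hN i (by simpa using hi), hi⟩
          · rintro ⟨_, hi⟩; exact hi
        rw [this]; exact htr N
      · ext n
        simp [toCantor]
    exact hcl.isCompact




lemma empty_mem_famComb (F G : Set (Finset ℕ)) : (∅ : Finset ℕ) ∈ famComb F G := Or.inl rfl

section decomp
variable {F G : Set (Finset ℕ)} {n : ℕ} {Es : Fin n → Finset ℕ} {mins : Fin n → ℕ}

lemma mins_strictMono
    (hord : ∀ i j : Fin n, i < j → ∀ a ∈ Es i, ∀ b ∈ Es j, a < b)
    (hleast : ∀ i, IsLeast (↑(Es i) : Set ℕ) (mins i)) :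
    StrictMono mins := fun i j hij =>
  hord i j hij _ (hleast i).1 _ (hleast j).1

end decomp

/-- `sInf`-based minimum of a finset. -/
lemma isLeast_sInf {s : Finset ℕ} (hs : s.Nonempty) : IsLeast (↑s : Set ℕ) (sInf ↑s) := by
  constructor
  · exact Nat.sInf_mem (by exact_mod_cast hs.to_set)
  · intro a ha
    exact Nat.sInf_le ha

lemma famComb_spreading {F G : Set (Finset ℕ)} (hF : Spreading F) (hG : Spreading G) :
    Spreading (famComb F G) := by
  rintro S f hmono hle (rfl | ⟨n, Es, mins, hGne, hord, hleast, hminF, rfl⟩)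
  · simp only [Finset.image_empty]; exact empty_mem_famComb F G
  · set S := Finset.univ.biUnion Es with hS
    have hsub : ∀ i, Es i ⊆ S := fun i => Finset.subset_biUnion_of_mem Es (Finset.mem_univ i)
    refine Or.inr ⟨n, fun i => (Es i).image f, fun i => f (mins i), ?_, ?_, ?_, ?_, ?_⟩
    · intro i
      refine ⟨hG _ f (hmono.mono ?_) (fun m hm => hle m (hsub i hm)) (hGne i).1,
        (hGne i).2.image f⟩
      exact_mod_cast hsub i
    · rintro i j hij a ha b hb
      simp only [Finset.mem_image] at ha hb
      obtain ⟨a', ha', rfl⟩ := ha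
      obtain ⟨b', hb', rfl⟩ := hb
      exact hmono (by exact_mod_cast hsub i ha') (by exact_mod_cast hsub j hb')
        (hord i j hij a' ha' b' hb')
    · intro i
      constructor
      · exact Finset.mem_image_of_mem f (hleast i).1
      · rintro a ha
        simp only [Finset.coe_image, Set.mem_image] at ha
        obtain ⟨a', ha', rfl⟩ := ha
        exact hmono.monotoneOn (by exact_mod_cast hsub i (hleast i).1)
          (by exact_mod_cast hsub i (by exact_mod_cast ha')) ((hleast i).2 (by exact_mod_cast ha'))
    · have : (Finset.univ.image fun i => f (mins i)) = (Finset.univ.image mins).image f := by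
        rw [Finset.image_image]; rfl
      rw [this]
      refine hF _ f (hmono.mono ?_) ?_ hminF
      · intro m hm
        simp only [Finset.coe_image, Set.mem_image, Finset.mem_coe, Finset.mem_image] at hm
        obtain ⟨i, _, rfl⟩ := hm
        exact_mod_cast hsub i (hleast i).1
      · intro m hm
        simp only [Finset.mem_image] at hm
        obtain ⟨i, _, rfl⟩ := hm
        exact hle _ (hsub i (hleast i).1)
    · rw [Finset.biUnion_image]  -- maybe wrong name/direction

lemma famComb_hereditary {F G : Set (Finset ℕ)} (hFh : Hereditary F) (hGh : Hereditary G)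
    (hFs : Spreading F) :
    Hereditary (famComb F G) := by
  rintro D S hDS (rfl | ⟨n, Es, mins, hGne, hord, hleast, hminF, rfl⟩)
  · left; exact Finset.subset_empty.mp hDS
  · set S := Finset.univ.biUnion Es with hS
    rcases eq_or_ne D ∅ with rfl | hDne
    · exact empty_mem_famComb F G
    have hmm : StrictMono mins := mins_strictMono hord hleast
    set I : Finset (Fin n) := Finset.univ.filter (fun i => (D ∩ Es i).Nonempty) with hI
    set k := I.card with hk
    set e : Fin k ≃o {x // x ∈ I} := I.orderIsoOfFin rfl with he
    have heI : ∀ j : Fin k, ((e j : Fin n)) ∈ I := fun j => (e j).2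
    have hne : ∀ i ∈ I, (D ∩ Es i).Nonempty := by
      intro i hi; simpa [hI] using hi
    have hDi_sub : ∀ i, (D ∩ Es i : Finset ℕ) ⊆ Es i := fun i => Finset.inter_subset_right
    refine Or.inr ⟨k, fun j => D ∩ Es (e j), fun j => sInf ↑(D ∩ Es (e j)), ?_, ?_, ?_, ?_, ?_⟩
    · intro j
      exact ⟨hGh (hDi_sub _) (hGne _).1, hne _ (heI j)⟩
    · intro i j hij a ha b hb
      have : ((e i : Fin n)) < ((e j : Fin n)) := by
        have := e.strictMono hij
        exact_mod_cast this
      exact hord _ _ this a (hDi_sub _ ha) b (hDi_sub _ hb)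
    · intro j
      exact isLeast_sInf (hne _ (heI j))
    · -- the new set of minima is in F
      -- old partial min set
      have hminj : ∀ i ∈ I, ∀ i' ∈ I, mins i = mins i' → i = i' := by
        intro i _ i' _ hmm'
        exact hmm.injective hmm'
      set g : ℕ → ℕ := fun m =>
        if h : ∃ i, i ∈ I ∧ mins i = m then sInf ↑(D ∩ Es h.choose) else m with hg
      have hgval : ∀ i ∈ I, g (mins i) = sInf ↑(D ∩ Es i) := by
        intro i hi
        have hex : ∃ i', i' ∈ I ∧ mins i' = mins i := ⟨i, hi, rfl⟩
        have : hex.choose = i := hminj _ hex.choose_spec.1 _ hi hex.choose_spec.2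
        simp only [hg, dif_pos hex, this]
      have hT : I.image mins ∈ F :=
        hFh (Finset.image_subset_image (Finset.subset_univ I)) hminF
      have hlow : ∀ i ∈ I, mins i ≤ sInf ↑(D ∩ Es i) := by
        intro i hi
        exact (hleast i).2 (by exact_mod_cast hDi_sub i (isLeast_sInf (hne i hi)).1)
      have hsinf_mem : ∀ i ∈ I, sInf ↑(D ∩ Es i) ∈ Es i := by
        intro i hi
        exact hDi_sub i (isLeast_sInf (hne i hi)).1
      have hgmono : StrictMonoOn g ↑(I.image mins) := by
        rintro m hm m' hm' hlt
        simp only [Finset.coe_image, Set.mem_image, Finset.mem_coe] at hm hm'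
        obtain ⟨i, hi, rfl⟩ := hm
        obtain ⟨i', hi', rfl⟩ := hm'
        have hii' : i < i' := by
          by_contra hcon
          push_neg at hcon
          rcases lt_or_eq_of_le hcon with h' | h'
          · exact absurd (hmm h') (not_lt.mpr hlt.le)
          · subst h'; exact lt_irrefl _ hlt
        rw [hgval i hi, hgval i' hi']
        exact hord _ _ hii' _ (hsinf_mem i hi) _ (hsinf_mem i' hi')
      have hgle : ∀ m ∈ I.image mins, m ≤ g m := by
        intro m hm
        simp only [Finset.mem_image] at hm
        obtain ⟨i, hi, rfl⟩ := hm
        rw [hgval i hi]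
        exact hlow i hi
      have hspread := hFs _ g hgmono hgle hT
      have himg : (I.image mins).image g = Finset.univ.image fun j : Fin k => sInf ↑(D ∩ Es (e j)) := by
        ext m
        simp only [Finset.mem_image, Finset.mem_univ, true_and, Finset.image_image]
        constructor
        · rintro ⟨i, hi, rfl⟩
          simp only [Function.comp_apply] at *
          rw [hgval i hi]
          obtain ⟨j, hj⟩ := e.surjective ⟨i, hi⟩
          exact ⟨j, by rw [hj]⟩
        · rintro ⟨j, rfl⟩
          exact ⟨e j, heI j, by rw [Function.comp_apply, hgval _ (heI j)]⟩
      rw [← himg]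
      exact hspread
    · -- D is the union of the pieces
      ext d
      simp only [Finset.mem_biUnion, Finset.mem_univ, true_and]
      constructor
      · intro hd
        have : d ∈ S := hDS hd
        rw [hS] at this
        simp only [Finset.mem_biUnion, Finset.mem_univ, true_and] at this
        obtain ⟨i, hi⟩ := this
        have hiI : i ∈ I := by
          simp only [hI, Finset.mem_filter, Finset.mem_univ, true_and]
          exact ⟨d, Finset.mem_inter.mpr ⟨hd, hi⟩⟩
        obtain ⟨j, hj⟩ := e.surjective ⟨i, hiI⟩
        refine ⟨j, Finset.mem_inter.mpr ⟨hd, ?_⟩⟩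
        rw [show ((e j : Fin n)) = i from congrArg Subtype.val hj]
        exact hi
      · rintro ⟨j, hj⟩
        exact (Finset.mem_inter.mp hj).1

/-- A hereditary family with compact image contains no infinite increasing chain of
initial segments of a strictly monotone sequence. -/
lemma no_infinite_chain {H : Set (Finset ℕ)} (hHh : Hereditary H)
    (hcomp : IsCompact (toCantor '' H)) (b : ℕ → ℕ) (hb : StrictMono b)
    (hmem : ∀ k, (Finset.range k).image b ∈ H) : False := by
  classical
  set x : ℕ → Bool := fun m => decide (∃ j, b j = m) with hx
  have htr : ∀ N, trunc x N ∈ H := by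
    intro N
    have hex : ∃ j, N ≤ b j := ⟨N, hb.le_apply⟩
    set k := Nat.find hex with hk
    have : trunc x N = (Finset.range k).image b := by
      ext m
      simp only [mem_trunc, hx, decide_eq_true_eq, Finset.mem_image, Finset.mem_range]
      constructor
      · rintro ⟨hmN, j, rfl⟩
        refine ⟨j, ?_, rfl⟩
        by_contra hcon
        push_neg at hcon
        have : N ≤ b k := Nat.find_spec hex
        exact absurd (this.trans (hb.monotone hcon)) (not_le.mpr hmN)
      · rintro ⟨j, hj, rfl⟩
        have : ¬ N ≤ b j := Nat.find_min hex hj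
        exact ⟨not_le.mp this, j, rfl⟩
    rw [this]; exact hmem k
  have hfin := (isCompact_image_iff hHh).mp hcomp x htr
  have : Set.range b ⊆ {n | x n = true} := by
    rintro m ⟨j, rfl⟩
    simp [hx]
  exact (Set.infinite_range_of_injective hb.injective) (Set.Finite.subset hfin this)

/-- Decompositions of the segment of a sequence `a` between indices `s` and `k` into
consecutive blocks from `G`; `D` collects the values of `a` at the cut points. -/
inductive SegDec (G : Set (Finset ℕ)) (a : ℕ → ℕ) : ℕ → ℕ → Finset ℕ → Prop
  | nil (s : ℕ) : SegDec G a s s ∅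
  | cons {s t k : ℕ} {D : Finset ℕ} (hst : s < t) (hG : (Finset.Ico s t).image a ∈ G)
      (hrest : SegDec G a t k D) : SegDec G a s k (insert (a s) D)

lemma SegDec.le {G : Set (Finset ℕ)} {a : ℕ → ℕ} {s k : ℕ} {D : Finset ℕ}
    (h : SegDec G a s k D) : s ≤ k := by
  induction h with
  | nil => exact le_rfl
  | cons hst _ _ ih => exact hst.le.trans ih

lemma seg_isLeast {a : ℕ → ℕ} (ha : StrictMono a) {s t : ℕ} (hst : s < t) :
    IsLeast (↑((Finset.Ico s t).image a) : Set ℕ) (a s) := by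
  constructor
  · exact_mod_cast Finset.mem_image_of_mem a (Finset.mem_Ico.mpr ⟨le_rfl, hst⟩)
  · rintro m hm
    simp only [Finset.coe_image, Set.mem_image, Finset.mem_coe, Finset.mem_Ico] at hm
    obtain ⟨i, ⟨hsi, _⟩, rfl⟩ := hm
    exact ha.monotone hsi

lemma bridge_aux {G : Set (Finset ℕ)} {a : ℕ → ℕ} (ha : StrictMono a) :
    ∀ (n : ℕ) (Es : Fin n → Finset ℕ) (mins : Fin n → ℕ) (s k : ℕ), s ≤ k →
    (∀ i, Es i ∈ G ∧ (Es i).Nonempty) →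
    (∀ i j : Fin n, i < j → ∀ x ∈ Es i, ∀ y ∈ Es j, x < y) →
    (∀ i, IsLeast (↑(Es i) : Set ℕ) (mins i)) →
    (Finset.Ico s k).image a = Finset.univ.biUnion Es →
    SegDec G a s k (Finset.univ.image mins) := by
  intro n
  induction n with
  | zero =>
    intro Es mins s k hsk _ _ _ hsplit
    have hIco : (Finset.Ico s k) = ∅ := by
      by_contra hcon
      have : ((Finset.Ico s k).image a).Nonempty :=
        (Finset.nonempty_of_ne_empty hcon).image a
      rw [hsplit] at this
      simp at this
    have : s = k := by
      rcases Nat.lt_or_ge s k with h | h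
      · exact absurd (Finset.nonempty_Ico.mpr h) (by rw [hIco]; simp)
      · exact le_antisymm hsk h
    subst this
    simpa using SegDec.nil s
  | succ n ih =>
    intro Es mins s k hsk hGne hord hleast hsplit
    set R := Finset.univ.biUnion (fun i : Fin n => Es i.succ) with hR
    have hsplit2 : (Finset.Ico s k).image a = Es 0 ∪ R := by
      rw [hsplit]
      ext m
      simp only [Finset.mem_biUnion, Finset.mem_univ, true_and, Finset.mem_union, hR]
      constructor
      · rintro ⟨i, hi⟩
        rcases Fin.eq_zero_or_eq_succ i with rfl | ⟨j, rfl⟩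
        · exact Or.inl hi
        · exact Or.inr ⟨j, hi⟩
      · rintro (h | ⟨j, hj⟩)
        · exact ⟨0, h⟩
        · exact ⟨j.succ, hj⟩
    have hslt : s < k := by
      rcases Nat.lt_or_ge s k with h | h
      · exact h
      · exfalso
        have h0 : (Es 0).Nonempty := (hGne 0).2
        obtain ⟨m, hm⟩ := h0
        have : m ∈ (Finset.Ico s k).image a := hsplit2 ▸ Finset.mem_union_left _ hm
        simp only [Finset.mem_image, Finset.mem_Ico] at this
        obtain ⟨i, ⟨h1, h2⟩, _⟩ := this
        omega
    have hord0R : ∀ x ∈ Es 0, ∀ y ∈ R, x < y := by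
      intro x hx y hy
      simp only [hR, Finset.mem_biUnion, Finset.mem_univ, true_and] at hy
      obtain ⟨j, hj⟩ := hy
      exact hord 0 j.succ (Fin.succ_pos j) x hx y hj
    set J := (Finset.Ico s k).filter (fun i => a i ∈ Es 0) with hJ
    have hJim : J.image a = Es 0 := by
      ext m
      simp only [hJ, Finset.mem_image, Finset.mem_filter, Finset.mem_Ico]
      constructor
      · rintro ⟨i, ⟨_, hi⟩, rfl⟩; exact hi
      · intro hm
        have : m ∈ (Finset.Ico s k).image a := hsplit2 ▸ Finset.mem_union_left _ hm
        simp only [Finset.mem_image, Finset.mem_Ico] at this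
        obtain ⟨i, hi, rfl⟩ := this
        exact ⟨i, ⟨hi, hm⟩, rfl⟩
    have hJne : J.Nonempty := by
      obtain ⟨m, hm⟩ := (hGne 0).2
      rw [← hJim] at hm
      obtain ⟨i, hi, _⟩ := Finset.mem_image.mp hm
      exact ⟨i, hi⟩
    set M := J.max' hJne with hM
    set t := M + 1 with ht
    have hMJ : M ∈ J := J.max'_mem hJne
    have hMIco : M ∈ Finset.Ico s k := (Finset.mem_filter.mp hMJ).1
    have hJeq : J = Finset.Ico s t := by
      ext i
      simp only [Finset.mem_Ico, ht]
      constructor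
      · intro hi
        have h1 := (Finset.mem_Ico.mp (Finset.mem_filter.mp hi).1).1
        have h2 := J.le_max' i hi
        omega
      · rintro ⟨hsi, hit⟩
        have hik : i < k := lt_of_le_of_lt (by omega) (Finset.mem_Ico.mp hMIco).2
        have hmem : a i ∈ (Finset.Ico s k).image a :=
          Finset.mem_image_of_mem a (Finset.mem_Ico.mpr ⟨hsi, hik⟩)
        rw [hsplit2] at hmem
        rcases Finset.mem_union.mp hmem with h | h
        · exact Finset.mem_filter.mpr ⟨Finset.mem_Ico.mpr ⟨hsi, hik⟩, h⟩
        · exfalso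
          have haM : a M ∈ Es 0 := (Finset.mem_filter.mp hMJ).2
          have : a M < a i := hord0R _ haM _ h
          have : a i ≤ a M := ha.monotone (by omega)
          omega
    have hst : s < t := by
      have := (Finset.mem_Ico.mp hMIco).1; omega
    have htk : t ≤ k := (Finset.mem_Ico.mp hMIco).2
    have hEs0 : Es 0 = (Finset.Ico s t).image a := by rw [← hJim, hJeq]
    have hdisj1 : Disjoint (Es 0) R := by
      rw [Finset.disjoint_left]
      intro m hm hm'
      exact lt_irrefl m (hord0R m hm m hm')
    have hdisj2 : Disjoint ((Finset.Ico s t).image a) ((Finset.Ico t k).image a) := by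
      rw [Finset.disjoint_left]
      intro m hm hm'
      simp only [Finset.mem_image, Finset.mem_Ico] at hm hm'
      obtain ⟨i, hi, rfl⟩ := hm
      obtain ⟨i', hi', he⟩ := hm'
      have : i' = i := ha.injective he
      omega
    have hRseg : R = (Finset.Ico t k).image a := by
      have hunion : Es 0 ∪ R = (Finset.Ico s t).image a ∪ (Finset.Ico t k).image a := by
        rw [← hsplit2, ← Finset.image_union, Finset.Ico_union_Ico_eq_Ico hst.le htk]
      calc R = (Es 0 ∪ R) \ Es 0 := by rw [Finset.union_sdiff_cancel_left hdisj1]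
        _ = ((Finset.Ico s t).image a ∪ (Finset.Ico t k).image a) \ (Finset.Ico s t).image a := by
            rw [hunion, hEs0]
        _ = (Finset.Ico t k).image a := Finset.union_sdiff_cancel_left hdisj2
    have hmins0 : mins 0 = a s := (hleast 0).unique (hEs0 ▸ seg_isLeast ha hst)
    have hrec : SegDec G a t k (Finset.univ.image (fun i : Fin n => mins i.succ)) := by
      apply ih (fun i => Es i.succ) (fun i => mins i.succ) t k htk
      · intro i; exact hGne i.succ
      · intro i j hij x hx y hy
        exact hord i.succ j.succ (Fin.succ_lt_succ_iff.mpr hij) x hx y hy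
      · intro i; exact hleast i.succ
      · exact hRseg.symm
    have himage : Finset.univ.image mins =
        insert (mins 0) (Finset.univ.image (fun i : Fin n => mins i.succ)) := by
      ext m
      simp only [Finset.mem_image, Finset.mem_univ, true_and, Finset.mem_insert]
      constructor
      · rintro ⟨i, rfl⟩
        rcases Fin.eq_zero_or_eq_succ i with rfl | ⟨j, rfl⟩
        · exact Or.inl rfl
        · exact Or.inr ⟨j, rfl⟩
      · rintro (rfl | ⟨j, rfl⟩)
        · exact ⟨0, rfl⟩
        · exact ⟨j.succ, rfl⟩
    rw [himage, hmins0]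
    exact SegDec.cons hst (hEs0 ▸ (hGne 0).1) hrec

lemma bridge {F G : Set (Finset ℕ)} (hFh : Hereditary F) (hFne : F.Nonempty) {a : ℕ → ℕ}
    (ha : StrictMono a) {s k : ℕ} (hsk : s ≤ k)
    (hT : (Finset.Ico s k).image a ∈ famComb F G) :
    ∃ D, SegDec G a s k D ∧ D ∈ F := by
  have hemptyF : (∅ : Finset ℕ) ∈ F := by
    obtain ⟨E, hE⟩ := hFne
    exact hFh (Finset.empty_subset E) hE
  rcases hT with h | ⟨n, Es, mins, hGne, hord, hleast, hminF, hval⟩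
  · -- the segment is empty
    have : s = k := by
      rcases Nat.lt_or_ge s k with hlt | hge
      · exfalso
        have : ((Finset.Ico s k).image a).Nonempty := (Finset.nonempty_Ico.mpr hlt).image a
        rw [show (Finset.Ico s k).image a = ∅ from h] at this
        simp at this
      · exact le_antisymm hsk hge
    subst this
    exact ⟨∅, SegDec.nil s, hemptyF⟩
  · exact ⟨Finset.univ.image mins, bridge_aux ha n Es mins s k hsk hGne hord hleast hval, hminF⟩

lemma famComb_compact {F G : Set (Finset ℕ)} (hF : IsRegularFam F) (hG : IsRegularFam G)
    (hFne : F.Nonempty) :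
    IsCompact (toCantor '' famComb F G) := by
  classical
  obtain ⟨hFc, hFh, hFs⟩ := hF
  obtain ⟨hGc, hGh, hGs⟩ := hG
  rw [isCompact_image_iff (famComb_hereditary hFh hGh hFs)]
  intro x htr
  by_contra hinf
  rw [← Set.not_infinite, not_not] at hinf
  set p : ℕ → Prop := fun n => x n = true with hp
  have hpinf : (setOf p).Infinite := hinf
  set a : ℕ → ℕ := Nat.nth p with haa
  have ha : StrictMono a := Nat.nth_strictMono hpinf
  have hap : ∀ i, p (a i) := fun i => Nat.nth_mem_of_infinite hpinf i
  have hrange : ∀ n, p n → ∃ i, a i = n := by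
    intro n hn
    have := Nat.range_nth_of_infinite hpinf
    rw [Set.ext_iff] at this
    exact (this n).mpr hn
  -- initial segments of the support are truncations, hence in famComb
  have hseg : ∀ k, (Finset.Ico 0 k).image a ∈ famComb F G := by
    intro k
    have : (Finset.Ico 0 k).image a = trunc x (a k) := by
      ext m
      simp only [Finset.mem_image, Finset.mem_Ico, mem_trunc]
      constructor
      · rintro ⟨i, ⟨_, hik⟩, rfl⟩
        exact ⟨ha hik, hap i⟩
      · rintro ⟨hm, hxm⟩
        obtain ⟨i, rfl⟩ := hrange m hxm
        exact ⟨i, ⟨Nat.zero_le i, ha.lt_iff_lt.mp hm⟩, rfl⟩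
    rw [this]
    exact htr (a k)
  -- the invariant
  set Inv : ℕ → Finset ℕ → Prop :=
    fun s M => {k | s < k ∧ ∃ D, SegDec G a s k D ∧ M ∪ D ∈ F}.Infinite with hInv
  have hInv0 : Inv 0 ∅ := by
    apply Set.Infinite.mono (s := Set.Ioi 0)
    · intro k hk
      obtain ⟨D, hD1, hD2⟩ := bridge hFh hFne ha (Nat.zero_le k) (hseg k)
      exact ⟨hk, D, hD1, by simpa using hD2⟩
    · exact Set.Ioi_infinite 0
  have hstep : ∀ s M, Inv s M → ∃ t, s < t ∧ Inv t (insert (a s) M) := by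
    intro s M hsM
    set K := {k | s < k ∧ ∃ D, SegDec G a s k D ∧ M ∪ D ∈ F} with hK
    -- for each k ∈ K, extract the first cut
    have hcut : ∀ k ∈ K, ∃ t D', s < t ∧ (Finset.Ico s t).image a ∈ G ∧
        SegDec G a t k D' ∧ (insert (a s) M) ∪ D' ∈ F := by
      rintro k ⟨hsk, D, hdec, hDF⟩
      cases hdec with
      | nil => omega
      | @cons _ t _ D' hst hGmem hrest =>
        refine ⟨t, D', hst, hGmem, hrest, ?_⟩
        have : insert (a s) M ∪ D' = M ∪ insert (a s) D' := by
          ext m; simp only [Finset.mem_union, Finset.mem_insert]; tauto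
        rw [this]; exact hDF
    set f : ℕ → ℕ := fun k => if h : k ∈ K then (hcut k h).choose else 0 with hf
    have hfspec : ∀ k (h : k ∈ K), s < f k ∧ (Finset.Ico s (f k)).image a ∈ G ∧
        ∃ D', SegDec G a (f k) k D' ∧ (insert (a s) M) ∪ D' ∈ F := by
      intro k h
      have := (hcut k h).choose_spec
      obtain ⟨D', h1, h2, h3, h4⟩ := this
      rw [hf]; simp only [dif_pos h]
      exact ⟨h1, h2, D', h3, h4⟩
    -- the first cuts are bounded
    have hbdd : ∃ B, ∀ k ∈ K, f k ≤ B := by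
      by_contra hcon
      push_neg at hcon
      -- arbitrary long initial segments of the tail are in G
      have hGall : ∀ c, (Finset.range c).image (fun j => a (s + j)) ∈ G := by
        intro c
        obtain ⟨k, hk, hkc⟩ := hcon (s + c)
        have h1 : (Finset.Ico s (f k)).image a ∈ G := (hfspec k hk).2.1
        apply hGh _ h1
        intro m hm
        simp only [Finset.mem_image, Finset.mem_range] at hm
        obtain ⟨j, hj, rfl⟩ := hm
        exact Finset.mem_image_of_mem a (Finset.mem_Ico.mpr ⟨Nat.le_add_right s j, by omega⟩)
      exact no_infinite_chain hGh hGc _ (fun i j hij => ha (by omega)) hGall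
    obtain ⟨B, hB⟩ := hbdd
    -- pigeonhole: some fiber is infinite
    have hfiber : ∃ t, {k ∈ K | f k = t}.Infinite := by
      by_contra hcon
      push_neg at hcon
      have : K ⊆ ⋃ t ∈ Finset.range (B + 1), {k ∈ K | f k = t} := by
        intro k hk
        simp only [Set.mem_iUnion]
        exact ⟨f k, by simpa using Nat.lt_succ_of_le (hB k hk), hk, rfl⟩
      exact hsM (Set.Finite.subset (Set.Finite.biUnion (Finset.range (B+1)).finite_toSet
        (fun t _ => hcon t)) this)
    obtain ⟨t, hfib⟩ := hfiber
    -- t > s since the fiber is nonempty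
    obtain ⟨k₀, hk₀K, hk₀⟩ := hfib.nonempty
    have hst : s < t := hk₀ ▸ (hfspec k₀ hk₀K).1
    refine ⟨t, hst, ?_⟩
    apply Set.Infinite.mono (s := {k ∈ K | f k = t} \ {t})
    · rintro k ⟨⟨hkK, hkt⟩, hknt⟩
      obtain ⟨_, _, D', hdec, hDF⟩ := hfspec k hkK
      rw [hkt] at hdec
      refine ⟨lt_of_le_of_ne hdec.le (Ne.symm (by simpa using hknt)), D', hdec, hDF⟩
    · exact hfib.diff (Set.finite_singleton t)
  -- build the infinite chain of cut points
  set u : ℕ → {q : ℕ × Finset ℕ // Inv q.1 q.2} := fun j =>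
    Nat.rec ⟨(0, ∅), hInv0⟩
      (fun _ prev => ⟨((hstep prev.1.1 prev.1.2 prev.2).choose,
        insert (a prev.1.1) prev.1.2), (hstep prev.1.1 prev.1.2 prev.2).choose_spec.2⟩) j
    with hu
  set S : ℕ → ℕ := fun j => (u j).1.1 with hS
  have hSmono : StrictMono S := by
    apply strictMono_nat_of_lt_succ
    intro j
    exact (hstep (u j).1.1 (u j).1.2 (u j).2).choose_spec.1
  have hM : ∀ j, (u j).1.2 = (Finset.range j).image (fun i => a (S i)) := by
    intro j
    induction j with
    | zero => simp [hu]
    | succ j ihj =>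
      have : (u (j+1)).1.2 = insert (a (S j)) (u j).1.2 := rfl
      rw [this, ihj, Finset.range_add_one, Finset.image_insert]
  have hMF : ∀ j, (Finset.range j).image (fun i => a (S i)) ∈ F := by
    intro j
    obtain ⟨k, _, D, _, hDF⟩ := (u j).2.nonempty
    rw [hM j] at hDF
    exact hFh Finset.subset_union_left hDF
  exact no_infinite_chain hFh hFc _ (fun i j hij => ha (hSmono hij)) hMF

/-! ### The combinatorial derivative of a family -/

def famDeriv (H : Set (Finset ℕ)) : Set (Finset ℕ) :=
  {E | E ∈ H ∧ {n | n ∉ E ∧ insert n E ∈ H}.Infinite}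

lemma famDeriv_subset (H : Set (Finset ℕ)) : famDeriv H ⊆ H := fun _ h => h.1

lemma famDeriv_mono {H H' : Set (Finset ℕ)} (h : H ⊆ H') : famDeriv H ⊆ famDeriv H' := by
  rintro E ⟨hE, hinf⟩
  refine ⟨h hE, hinf.mono ?_⟩
  rintro n ⟨h1, h2⟩
  exact ⟨h1, h h2⟩

lemma famDeriv_hereditary {H : Set (Finset ℕ)} (hH : Hereditary H) :
    Hereditary (famDeriv H) := by
  rintro D E hDE ⟨hE, hinf⟩
  refine ⟨hH hDE hE, ?_⟩
  apply Set.Infinite.mono (s := {n | n ∉ E ∧ insert n E ∈ H} \ ↑D) ?_ (hinf.diff D.finite_toSet)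
  rintro n ⟨⟨hn1, hn2⟩, hn3⟩
  refine ⟨by simpa using hn3, hH ?_ hn2⟩
  exact Finset.insert_subset_insert n hDE
lemma infinite_of_unbounded {Q : ℕ → Prop} (h : ∀ N, ∃ m, N ≤ m ∧ Q m) :
    {m | Q m}.Infinite := by
  rw [Set.infinite_coe_iff.symm]
  by_contra hfin
  rw [not_infinite_iff_finite] at hfin
  have hfin' : {m | Q m}.Finite := Set.toFinite _
  rcases hfin'.bddAbove with ⟨B, hB⟩
  obtain ⟨m, hm, hQ⟩ := h (B + 1)
  exact absurd (hB hQ) (by omega)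

lemma famDeriv_spreading {H : Set (Finset ℕ)} (hHs : Spreading H) :
    Spreading (famDeriv H) := by
  classical
  rintro E f hmono hle ⟨hE, hinf⟩
  refine ⟨hHs E f hmono hle hE, ?_⟩
  apply infinite_of_unbounded
  intro N
  -- pick a large extension point of `E`
  set B := ((E ∪ E.image f).sup id) + N + 1 with hB
  have hBbig : ∀ x ∈ E ∪ E.image f, x < B := by
    intro x hx
    have : x ≤ (E ∪ E.image f).sup id := Finset.le_sup (f := id) hx
    omega
  obtain ⟨m, hm⟩ := hinf.exists_gt B
  obtain ⟨⟨hmE, hmH⟩, hmB⟩ := hm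
  set g : ℕ → ℕ := fun x => if x ∈ E then f x else m with hg
  have hgm : g m = m := by simp [hg, hmE]
  have hgE : ∀ x ∈ E, g x = f x := fun x hx => by simp [hg, hx]
  have himg : (insert m E).image g = insert m (E.image f) := by
    rw [Finset.image_insert, hgm]
    congr 1
    exact Finset.image_congr (fun x hx => hgE x hx)
  have : (insert m E).image g ∈ H := by
    apply hHs _ g _ _ hmH
    · intro x hx y hy hxy
      simp only [Finset.coe_insert, Set.mem_insert_iff, Finset.mem_coe] at hx hy
      rcases hx with rfl | hx
      · rcases hy with rfl | hy
        · omega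
        · exfalso
          have : y < B := hBbig y (Finset.mem_union_left _ hy)
          omega
      · rcases hy with rfl | hy
        · rw [hgE x hx, hgm]
          have : f x ∈ E.image f := Finset.mem_image_of_mem f hx
          have := hBbig _ (Finset.mem_union_right _ this)
          omega
        · rw [hgE x hx, hgE y hy]
          exact hmono hx hy hxy
    · intro x hx
      rcases Finset.mem_insert.mp hx with rfl | hx
      · rw [hgm]
      · rw [hgE x hx]; exact hle x hx
  rw [himg] at this
  refine ⟨m, by omega, ?_, this⟩
  intro hcon
  have := hBbig m (Finset.mem_union_right _ hcon)
  omega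

lemma singleton_mem_of_spreading {H : Set (Finset ℕ)} (hHh : Hereditary H) (hHs : Spreading H)
    {E : Finset ℕ} (hE : E ∈ H) (hne : E.Nonempty) :
    ∃ m₀, ∀ m ≥ m₀, ({m} : Finset ℕ) ∈ H := by
  classical
  set e := E.min' hne with he
  have h1 : ({e} : Finset ℕ) ∈ H := hHh (by simp [he, Finset.min'_mem]) hE
  refine ⟨e, fun m hm => ?_⟩
  have : ({e} : Finset ℕ).image (fun _ => m) ∈ H := by
    apply hHs _ _ _ _ h1
    · intro x hx y hy hxy
      simp only [Finset.coe_singleton, Set.mem_singleton_iff] at hx hy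
      subst hx; subst hy; omega
    · intro x hx
      simp only [Finset.mem_singleton] at hx
      subst hx; exact hm
  simpa using this

/-- A regular family with empty derivative and a nonempty member is `{∅}`. -/
lemma eq_singleton_empty {H : Set (Finset ℕ)} (hHh : Hereditary H) (hHs : Spreading H)
    (hne : H.Nonempty) (hd : famDeriv H = ∅) : H = {∅} := by
  classical
  have hempty : (∅ : Finset ℕ) ∈ H := by
    obtain ⟨E, hE⟩ := hne; exact hHh (Finset.empty_subset E) hE
  refine Set.eq_singleton_iff_unique_mem.mpr ⟨hempty, ?_⟩
  intro E hE
  by_contra hcon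
  have hEne : E.Nonempty := Finset.nonempty_iff_ne_empty.mpr hcon
  set M := E.max' hEne with hM
  set D := E.erase M with hD
  have hDH : D ∈ H := hHh (Finset.erase_subset _ _) hE
  have hDd : D ∈ famDeriv H := by
    refine ⟨hDH, infinite_of_unbounded ?_⟩
    intro N
    set n := M + N + 1 with hn
    have hnE : n ∉ E := fun hc => absurd (E.le_max' n hc) (by omega)
    set f : ℕ → ℕ := fun x => if x = M then n else x with hf
    have himg : E.image f = insert n D := by
      ext x
      simp only [Finset.mem_image, Finset.mem_insert, hD, Finset.mem_erase, hf]
      constructor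
      · rintro ⟨y, hy, rfl⟩
        by_cases hyM : y = M
        · simp [hyM]
        · simp only [if_neg hyM]
          exact Or.inr ⟨hyM, hy⟩
      · rintro (rfl | ⟨hx1, hx2⟩)
        · exact ⟨M, E.max'_mem hEne, by simp⟩
        · exact ⟨x, hx2, by simp [hx1]⟩
    have : E.image f ∈ H := by
      apply hHs _ _ _ _ hE
      · intro x hx y hy hxy
        simp only [Finset.mem_coe] at hx hy
        have hxM : x ≤ M := E.le_max' x hx
        have hyM : y ≤ M := E.le_max' y hy
        by_cases hy' : y = M
        · subst hy'
          have : x ≠ M := by omega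
          simp only [hf, if_neg this, if_pos rfl]
          omega
        · have : x ≠ M := by omega
          simp only [hf, if_neg this, if_neg hy']
          exact hxy
      · intro x hx
        by_cases hx' : x = M
        · subst hx'; simp only [hf, if_pos rfl]; omega
        · simp [hf, hx']
    rw [himg] at this
    refine ⟨n, by omega, ?_, this⟩
    simp only [hD, Finset.mem_erase]
    tauto
  rw [hd] at hDd
  exact hDd

lemma famDeriv_singleton_empty : famDeriv {(∅ : Finset ℕ)} = ∅ := by
  ext E
  simp only [famDeriv, Set.mem_setOf_eq, Set.mem_singleton_iff, Set.mem_empty_iff_false,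
    iff_false, not_and]
  rintro rfl
  intro hinf
  have : {n | n ∉ (∅ : Finset ℕ) ∧ insert n (∅ : Finset ℕ) = ∅} = ∅ := by
    ext n
    simp [Finset.insert_ne_empty]
  rw [this] at hinf
  exact hinf (Set.finite_empty)

/-! ### Transfinite iterates of the family derivative -/



noncomputable def famIter (H : Set (Finset ℕ)) (ξ : Ordinal) : Set (Finset ℕ) :=
  Ordinal.limitRecOn ξ H (fun _ S => famDeriv S)
    (fun o _ ih => ⋂ (ζ : Ordinal) (h : ζ < o), ih ζ h)

@[simp] lemma famIter_zero (H : Set (Finset ℕ)) : famIter H 0 = H :=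
  Ordinal.limitRecOn_zero _ _ _

@[simp] lemma famIter_succ (H : Set (Finset ℕ)) (ξ : Ordinal) :
    famIter H (ξ + 1) = famDeriv (famIter H ξ) :=
  Ordinal.limitRecOn_succ _ _ _ _

lemma famIter_limit (H : Set (Finset ℕ)) {o : Ordinal} (ho : Order.IsSuccLimit o) :
    famIter H o = ⋂ (ζ : Ordinal) (h : ζ < o), famIter H ζ := by
  exact Ordinal.limitRecOn_limit _ _ _ _ ho

lemma famIter_antitone (H : Set (Finset ℕ)) : ∀ ξ η : Ordinal, η ≤ ξ →
    famIter H ξ ⊆ famIter H η := by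
  intro ξ
  induction ξ using Ordinal.induction with
  | h ξ ih =>
    intro η hη
    rcases eq_or_lt_of_le hη with rfl | hη
    · exact le_rfl
    rcases Ordinal.zero_or_succ_or_isSuccLimit ξ with rfl | ⟨ζ, rfl⟩ | hlim

    · exact absurd hη (by simp : ¬ η < 0)
    · rw [show Order.succ ζ = ζ + 1 from (Ordinal.add_one_eq_succ ζ).symm, famIter_succ]
      refine (famDeriv_subset _).trans ?_
      exact ih ζ (Order.lt_succ_of_not_isMax (by simp)) η ((Order.lt_succ_iff_of_not_isMax (by simp)).mp hη)
    · rw [famIter_limit H hlim]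
      exact Set.iInter₂_subset η hη

lemma famIter_hereditary {H : Set (Finset ℕ)} (hH : Hereditary H) (ξ : Ordinal) :
    Hereditary (famIter H ξ) := by
  induction ξ using Ordinal.induction with
  | h ξ ih =>
    rcases Ordinal.zero_or_succ_or_isSuccLimit ξ with rfl | ⟨ζ, rfl⟩ | hlim

    · simpa using hH
    · rw [show Order.succ ζ = ζ + 1 from (Ordinal.add_one_eq_succ ζ).symm, famIter_succ]
      exact famDeriv_hereditary (ih ζ (Order.lt_succ_of_not_isMax (by simp)))
    · rw [famIter_limit H hlim]
      intro D E hDE hE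
      simp only [Set.mem_iInter] at hE ⊢
      exact fun ζ hζ => ih ζ hζ hDE (hE ζ hζ)

lemma famIter_spreading {H : Set (Finset ℕ)} (hH : Spreading H) (ξ : Ordinal) :
    Spreading (famIter H ξ) := by
  induction ξ using Ordinal.induction with
  | h ξ ih =>
    rcases Ordinal.zero_or_succ_or_isSuccLimit ξ with rfl | ⟨ζ, rfl⟩ | hlim

    · simpa using hH
    · rw [show Order.succ ζ = ζ + 1 from (Ordinal.add_one_eq_succ ζ).symm, famIter_succ]
      exact famDeriv_spreading (ih ζ (Order.lt_succ_of_not_isMax (by simp)))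
    · rw [famIter_limit H hlim]
      intro E f hmono hle hE
      simp only [Set.mem_iInter] at hE ⊢
      exact fun ζ hζ => ih ζ hζ E f hmono hle (hE ζ hζ)

lemma famIter_add (H : Set (Finset ℕ)) (γ : Ordinal) : ∀ δ : Ordinal,
    famIter H (γ + δ) = famIter (famIter H γ) δ := by
  intro δ
  induction δ using Ordinal.induction with
  | h δ ih =>
    rcases Ordinal.zero_or_succ_or_isSuccLimit δ with rfl | ⟨ε, rfl⟩ | hlim
    · simp
    · rw [show Order.succ ε = ε + 1 from (Ordinal.add_one_eq_succ ε).symm,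
        show γ + (ε + 1) = (γ + ε) + 1 from by rw [add_assoc],
        famIter_succ, famIter_succ, ih ε (Order.lt_succ_of_not_isMax (by simp))]
    · have hlim2 : Order.IsSuccLimit (γ + δ) := Ordinal.isSuccLimit_add γ hlim
      rw [famIter_limit H hlim2, famIter_limit _ hlim]
      apply Set.Subset.antisymm
      · intro x hx
        simp only [Set.mem_iInter] at hx ⊢
        intro ε hε
        rw [← ih ε hε]
        exact hx (γ + ε) ((add_lt_add_iff_left γ).mpr hε)
      · intro x hx
        simp only [Set.mem_iInter] at hx ⊢
        intro η hη
        rcases le_or_gt η γ with h | h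
        · have := hx 0 hlim.pos
          rw [← ih 0 hlim.pos] at this
          simp only [add_zero] at this
          exact famIter_antitone H γ η h this
        · have hle : γ ≤ η := h.le
          set ε := η - γ with hε
          have hηε : γ + ε = η := Ordinal.add_sub_cancel_of_le hle
          have hεδ : ε < δ := by
            rwa [← add_lt_add_iff_left γ, hηε]
          have := hx ε hεδ
          rw [← ih ε hεδ, hηε] at this
          exact this

/-! ### Correspondence between topological and combinatorial derivatives -/

lemma cbDeriv_image {H : Set (Finset ℕ)} (hH : Hereditary H) :
    cbDeriv (toCantor '' H) = toCantor '' famDeriv H := by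
  ext x
  constructor
  · rintro ⟨⟨E, hE, rfl⟩, hcl⟩
    refine ⟨E, ⟨hE, infinite_of_unbounded ?_⟩, rfl⟩
    intro N₀
    set N := N₀ + (E.sup id) + 1 with hN
    have hEN : ∀ i ∈ E, i < N := by
      intro i hi
      have : i ≤ E.sup id := Finset.le_sup (f := id) hi
      omega
    obtain ⟨y, hyS, hyag⟩ := (mem_closure_iff_trunc).mp hcl N
    obtain ⟨⟨E', hE', rfl⟩, hne⟩ := hyS
    have hEE' : E ⊆ E' := by
      intro i hi
      have h1 := hyag i (hEN i hi)
      have : toCantor E i = true := by simp [toCantor, hi]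
      rw [this] at h1
      simpa [toCantor] using h1
    have hne' : E' ≠ E := fun hc => hne (by simp [hc])
    have : ∃ m ∈ E', N ≤ m := by
      by_contra hcon
      push_neg at hcon
      apply hne'
      apply Finset.Subset.antisymm _ hEE'
      intro i hi
      have h1 := hyag i (hcon i hi)
      have h2 : toCantor E' i = true := by simp [toCantor, hi]
      rw [h2] at h1
      simpa [toCantor] using h1.symm
    obtain ⟨m, hmE', hmN⟩ := this
    refine ⟨m, by omega, ?_, hH ?_ hE'⟩
    · intro hc
      exact absurd (hEN m hc) (by omega)
    · exact Finset.insert_subset hmE' hEE'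
  · rintro ⟨E, ⟨hE, hinf⟩, rfl⟩
    refine ⟨⟨E, hE, rfl⟩, ?_⟩
    rw [mem_closure_iff_trunc]
    intro N
    obtain ⟨m, hm⟩ := hinf.exists_gt N
    obtain ⟨⟨hmE, hmH⟩, hmN⟩ := hm
    refine ⟨toCantor (insert m E), ⟨⟨_, hmH, rfl⟩, ?_⟩, ?_⟩
    · intro hc
      simp only [Set.mem_singleton_iff] at hc
      have := toCantor_injective hc
      exact hmE (this ▸ Finset.mem_insert_self m E)
    · intro i hiN
      have : i ≠ m := by omega
      simp [toCantor, Finset.mem_insert, this]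

lemma cbIter_image {H : Set (Finset ℕ)} (hH : Hereditary H) (ξ : Ordinal) :
    cbIter (toCantor '' H) ξ = toCantor '' famIter H ξ := by
  induction ξ using Ordinal.induction with
  | h ξ ih =>
    rcases Ordinal.zero_or_succ_or_isSuccLimit ξ with rfl | ⟨ζ, rfl⟩ | hlim
    · simp [cbIter, famIter, Ordinal.limitRecOn_zero]
    · rw [show Order.succ ζ = ζ + 1 from (Ordinal.add_one_eq_succ ζ).symm] at *
      have h1 : cbIter (toCantor '' H) (ζ + 1) = cbDeriv (cbIter (toCantor '' H) ζ) :=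
        Ordinal.limitRecOn_succ _ _ _ _
      rw [h1, famIter_succ, ih ζ (Order.lt_succ_of_not_isMax (by simp)),
        cbDeriv_image (famIter_hereditary hH ζ)]
    · have h1 : cbIter (toCantor '' H) ξ = ⋂ (ζ : Ordinal) (_ : ζ < ξ), cbIter (toCantor '' H) ζ :=
        Ordinal.limitRecOn_limit _ _ _ _ hlim
      rw [h1, famIter_limit H hlim]
      have h2 : ∀ ζ (h : ζ < ξ), cbIter (toCantor '' H) ζ = toCantor '' famIter H ζ :=
        fun ζ h => ih ζ h
      calc ⋂ (ζ : Ordinal) (_ : ζ < ξ), cbIter (toCantor '' H) ζ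
          = ⋂ (ζ : {ζ : Ordinal // ζ < ξ}), toCantor '' famIter H ζ.1 := by
            ext y
            simp only [Set.mem_iInter, Subtype.forall]
            constructor
            · intro h ζ hζ
              rw [← h2 ζ hζ]; exact h ζ hζ
            · intro h ζ hζ
              rw [h2 ζ hζ]; exact h ζ hζ
        _ = toCantor '' ⋂ (ζ : {ζ : Ordinal // ζ < ξ}), famIter H ζ.1 := by
            have : Nonempty {ζ : Ordinal // ζ < ξ} := ⟨⟨0, hlim.pos⟩⟩
            exact (Set.InjOn.image_iInter_eq (toCantor_injective.injOn)).symm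
        _ = toCantor '' ⋂ (ζ : Ordinal) (_ : ζ < ξ), famIter H ζ := by
            apply congrArg
            ext E
            constructor
            · intro h
              simp only [Set.mem_iInter] at h ⊢
              exact fun ζ hζ => h ⟨ζ, hζ⟩
            · intro h
              simp only [Set.mem_iInter] at h ⊢
              exact fun ζ => h ζ.1 ζ.2

/-! ### Decompositions with a prescribed set of minima -/

def DecompMin (G : Set (Finset ℕ)) (D M : Finset ℕ) : Prop :=
  ∃ (n : ℕ) (Es : Fin n → Finset ℕ) (mins : Fin n → ℕ),
    (∀ i, Es i ∈ G ∧ (Es i).Nonempty) ∧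
    (∀ i j : Fin n, i < j → ∀ a ∈ Es i, ∀ b ∈ Es j, a < b) ∧
    (∀ i, IsLeast (↑(Es i) : Set ℕ) (mins i)) ∧
    M = Finset.univ.image mins ∧
    D = Finset.univ.biUnion Es

lemma DecompMin.nil (G : Set (Finset ℕ)) : DecompMin G ∅ ∅ :=
  ⟨0, Fin.elim0, Fin.elim0, fun i => i.elim0, fun i => i.elim0, fun i => i.elim0, by simp, by simp⟩

lemma DecompMin.min_subset {G : Set (Finset ℕ)} {D M : Finset ℕ} (h : DecompMin G D M) :
    M ⊆ D := by
  obtain ⟨n, Es, mins, hGne, hord, hleast, rfl, rfl⟩ := h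
  intro m hm
  simp only [Finset.mem_image, Finset.mem_univ, true_and] at hm
  obtain ⟨i, rfl⟩ := hm
  exact Finset.mem_biUnion.mpr ⟨i, Finset.mem_univ i, (hleast i).1⟩

lemma mem_famComb_iff {F G : Set (Finset ℕ)} {E : Finset ℕ} :
    E ∈ famComb F G ↔ E = ∅ ∨ ∃ M, DecompMin G E M ∧ M ∈ F := by
  constructor
  · rintro (rfl | ⟨n, Es, mins, h1, h2, h3, h4, h5⟩)
    · exact Or.inl rfl
    · exact Or.inr ⟨Finset.univ.image mins, ⟨n, Es, mins, h1, h2, h3, rfl, h5⟩, h4⟩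
  · rintro (rfl | ⟨M, ⟨n, Es, mins, h1, h2, h3, rfl, h5⟩, hM⟩)
    · exact Or.inl rfl
    · exact Or.inr ⟨n, Es, mins, h1, h2, h3, hM, h5⟩

lemma famComb_mono_left {F F' G : Set (Finset ℕ)} (h : F ⊆ F') :
    famComb F G ⊆ famComb F' G := by
  intro E hE
  rw [mem_famComb_iff] at hE ⊢
  rcases hE with rfl | ⟨M, h1, h2⟩
  · exact Or.inl rfl
  · exact Or.inr ⟨M, h1, h h2⟩

lemma famComb_empty_left {G : Set (Finset ℕ)} : famComb {(∅ : Finset ℕ)} G = {∅} := by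
  ext E
  simp only [Set.mem_singleton_iff]
  rw [mem_famComb_iff]
  constructor
  · rintro (rfl | ⟨M, hdec, hM⟩)
    · rfl
    · simp only [Set.mem_singleton_iff] at hM
      subst hM
      obtain ⟨n, Es, mins, h1, h2, h3, h4, h5⟩ := hdec
      have hn : n = 0 := by
        by_contra hn
        have : mins ⟨0, Nat.pos_of_ne_zero hn⟩ ∈ Finset.univ.image mins :=
          Finset.mem_image_of_mem mins (Finset.mem_univ _)
        rw [← h4] at this
        simp at this
      subst hn
      rw [h5]
      simp
  · rintro rfl
    exact Or.inl rfl

lemma DecompMin.snoc {G : Set (Finset ℕ)} {D M B : Finset ℕ} (h : DecompMin G D M)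
    (hBG : B ∈ G) (hBne : B.Nonempty) (hDB : ∀ d ∈ D, ∀ b ∈ B, d < b) :
    DecompMin G (D ∪ B) (insert (sInf ↑B) M) := by
  obtain ⟨n, Es, mins, hGne, hord, hleast, rfl, rfl⟩ := h
  refine ⟨n + 1, Fin.snoc Es B, Fin.snoc mins (sInf ↑B), ?_, ?_, ?_, ?_, ?_⟩
  · intro i
    rcases Fin.eq_castSucc_or_eq_last i with ⟨j, rfl⟩ | rfl
    · simpa [Fin.snoc_castSucc] using hGne j
    · simpa [Fin.snoc_last] using ⟨hBG, hBne⟩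
  · intro i j hij a ha b hb
    rcases Fin.eq_castSucc_or_eq_last j with ⟨j₀, rfl⟩ | rfl
    · obtain ⟨i₀, rfl⟩ : ∃ i₀ : Fin n, i = Fin.castSucc i₀ := by
        rcases Fin.eq_castSucc_or_eq_last i with ⟨i₀, rfl⟩ | rfl
        · exact ⟨i₀, rfl⟩
        · exact absurd (hij.trans (Fin.castSucc_lt_last j₀)) (lt_irrefl _)
      rw [Fin.snoc_castSucc] at ha hb
      exact hord i₀ j₀ (by exact_mod_cast hij) a ha b hb
    · obtain ⟨i₀, rfl⟩ : ∃ i₀ : Fin n, i = Fin.castSucc i₀ := by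
        rcases Fin.eq_castSucc_or_eq_last i with ⟨i₀, rfl⟩ | rfl
        · exact ⟨i₀, rfl⟩
        · exact absurd hij (lt_irrefl _)
      rw [Fin.snoc_castSucc] at ha
      rw [Fin.snoc_last] at hb
      have haD : a ∈ Finset.univ.biUnion Es :=
        Finset.mem_biUnion.mpr ⟨i₀, Finset.mem_univ _, ha⟩
      exact hDB a haD b hb
  · intro i
    rcases Fin.eq_castSucc_or_eq_last i with ⟨j, rfl⟩ | rfl
    · simpa [Fin.snoc_castSucc] using hleast j
    · simpa [Fin.snoc_last] using isLeast_sInf hBne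
  · ext m
    simp only [Finset.mem_insert, Finset.mem_image, Finset.mem_univ, true_and]
    constructor
    · rintro (rfl | ⟨i, rfl⟩)
      · exact ⟨Fin.last n, by rw [Fin.snoc_last]⟩
      · exact ⟨i.castSucc, by rw [Fin.snoc_castSucc]⟩
    · rintro ⟨i, rfl⟩
      rcases Fin.eq_castSucc_or_eq_last i with ⟨j, rfl⟩ | rfl
      · exact Or.inr ⟨j, by rw [Fin.snoc_castSucc]⟩
      · exact Or.inl (by rw [Fin.snoc_last])
  · ext m
    simp only [Finset.mem_union, Finset.mem_biUnion, Finset.mem_univ, true_and]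
    constructor
    · rintro (⟨i, hi⟩ | hB)
      · exact ⟨i.castSucc, by rwa [Fin.snoc_castSucc]⟩
      · exact ⟨Fin.last n, by rwa [Fin.snoc_last]⟩
    · rintro ⟨i, hi⟩
      rcases Fin.eq_castSucc_or_eq_last i with ⟨j, rfl⟩ | rfl
      · rw [Fin.snoc_castSucc] at hi
        exact Or.inl ⟨j, hi⟩
      · rw [Fin.snoc_last] at hi
        exact Or.inr hi

lemma DecompMin.unsnoc {G : Set (Finset ℕ)} {D M : Finset ℕ} (h : DecompMin G D M)
    (hne : D.Nonempty) :
    ∃ D' B M', D = D' ∪ B ∧ M = insert (sInf ↑B) M' ∧ B ∈ G ∧ B.Nonempty ∧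
      (∀ d ∈ D', ∀ b ∈ B, d < b) ∧ DecompMin G D' M' := by
  obtain ⟨n, Es, mins, hGne, hord, hleast, rfl, rfl⟩ := h
  cases n with
  | zero => simp at hne
  | succ n' =>
    set B := Es (Fin.last n') with hB
    set D' := Finset.univ.biUnion (fun i : Fin n' => Es i.castSucc) with hD'
    set M' := Finset.univ.image (fun i : Fin n' => mins i.castSucc) with hM'
    have hsinf : sInf ↑B = mins (Fin.last n') :=
      (isLeast_sInf (hGne _).2).unique (hleast (Fin.last n'))
    refine ⟨D', B, M', ?_, ?_, (hGne _).1, (hGne _).2, ?_, ?_⟩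
    · ext m
      simp only [hD', Finset.mem_union, Finset.mem_biUnion, Finset.mem_univ, true_and, hB]
      constructor
      · rintro ⟨i, hi⟩
        rcases Fin.eq_castSucc_or_eq_last i with ⟨j, rfl⟩ | rfl
        · exact Or.inl ⟨j, hi⟩
        · exact Or.inr hi
      · rintro (⟨j, hj⟩ | hm)
        · exact ⟨j.castSucc, hj⟩
        · exact ⟨Fin.last n', hm⟩
    · rw [hsinf]
      ext m
      simp only [Finset.mem_insert, Finset.mem_image, Finset.mem_univ, true_and, hM']
      constructor
      · rintro ⟨i, rfl⟩
        rcases Fin.eq_castSucc_or_eq_last i with ⟨j, rfl⟩ | rfl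
        · exact Or.inr ⟨j, rfl⟩
        · exact Or.inl rfl
      · rintro (rfl | ⟨j, rfl⟩)
        · exact ⟨Fin.last n', rfl⟩
        · exact ⟨j.castSucc, rfl⟩
    · intro d hd b hb
      simp only [hD', Finset.mem_biUnion, Finset.mem_univ, true_and] at hd
      obtain ⟨i, hi⟩ := hd
      exact hord i.castSucc (Fin.last n') (Fin.castSucc_lt_last i) d hi b hb
    · refine ⟨n', fun i => Es i.castSucc, fun i => mins i.castSucc, fun i => hGne _, ?_,
        fun i => hleast _, rfl, rfl⟩
      intro i j hij a ha b hb
      exact hord i.castSucc j.castSucc (by exact_mod_cast hij) a ha b hb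

/-! ### Pigeonhole lemmas -/

lemma pigeonhole_infinite {S : Set ℕ} (hS : S.Infinite) {γ : Type*} (T : Finset γ)
    (f : ℕ → γ) (hf : ∀ m ∈ S, f m ∈ T) : ∃ c ∈ T, {m | m ∈ S ∧ f m = c}.Infinite := by
  by_contra hcon
  push_neg at hcon
  have : S ⊆ ⋃ c ∈ T, {m | m ∈ S ∧ f m = c} := by
    intro m hm
    simp only [Set.mem_iUnion]
    exact ⟨f m, hf m hm, hm, rfl⟩
  exact hS (Set.Finite.subset (Set.Finite.biUnion T.finite_toSet (fun c hc => hcon c hc)) this)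

lemma pigeonhole_ord {γ : Type*} {o : Ordinal} (ho : Order.IsSuccLimit o) (T : Finset γ)
    (P : γ → Ordinal → Prop) (hmono : ∀ c ζ' ζ, ζ' ≤ ζ → P c ζ → P c ζ')
    (h : ∀ ζ < o, ∃ c ∈ T, P c ζ) : ∃ c ∈ T, ∀ ζ < o, P c ζ := by
  by_contra hcon
  push_neg at hcon
  have hbd : ∀ c ∈ T, ∃ ζ < o, ¬ P c ζ := by
    intro c hc
    obtain ⟨ζ, hζ, hP⟩ := hcon c hc
    exact ⟨ζ, hζ, hP⟩
  classical
  set b : γ → Ordinal := fun c => if hc : c ∈ T then (hbd c hc).choose else 0 with hb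
  have hbspec : ∀ c (hc : c ∈ T), b c < o ∧ ¬ P c (b c) := by
    intro c hc
    have := (hbd c hc).choose_spec
    rw [hb]; simp only [dif_pos hc]
    exact this
  set ζ' := T.sup b with hζ'
  have hζ'o : ζ' < o := by
    rcases T.eq_empty_or_nonempty with rfl | hTne
    · simpa [hζ'] using ho.pos
    · rw [hζ', Finset.sup_lt_iff (by simpa using ho.pos)]
      exact fun c hc => (hbspec c hc).1
  obtain ⟨c, hc, hP⟩ := h ζ' hζ'o
  exact (hbspec c hc).2 (hmono c (b c) ζ' (Finset.le_sup hc) hP)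

/-! ### The auxiliary sets in the derivative computation -/

def ASet (H G : Set (Finset ℕ)) (ξ : Ordinal) : Set (Finset ℕ) :=
  {E | ∃ D B M, E = D ∪ B ∧ B.Nonempty ∧ B ∈ famIter G ξ ∧
    (∀ d ∈ D, ∀ b ∈ B, d < b) ∧ DecompMin G D M ∧ insert (sInf ↑B) M ∈ H}

lemma ASet_antitone {H G : Set (Finset ℕ)} {ξ η : Ordinal} (h : η ≤ ξ) :
    ASet H G ξ ⊆ ASet H G η := by
  rintro E ⟨D, B, M, h1, h2, h3, h4, h5, h6⟩
  exact ⟨D, B, M, h1, h2, famIter_antitone G ξ η h h3, h4, h5, h6⟩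

lemma sInf_singleton_fin (m : ℕ) : sInf (↑({m} : Finset ℕ) : Set ℕ) = m :=
  (isLeast_sInf (Finset.singleton_nonempty m)).unique
    ⟨by simp, by rintro b hb; simp only [Finset.coe_singleton, Set.mem_singleton_iff] at hb; omega⟩

lemma sInf_insert_of_gt {B : Finset ℕ} (hB : B.Nonempty) {m : ℕ} (hm : ∀ b ∈ B, b < m) :
    sInf (↑(insert m B) : Set ℕ) = sInf ↑B := by
  refine (isLeast_sInf (Finset.insert_nonempty m B)).unique ⟨?_, ?_⟩
  · exact_mod_cast Finset.mem_insert_of_mem (isLeast_sInf hB).1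
  · rintro b hb
    simp only [Finset.coe_insert, Set.mem_insert_iff, Finset.mem_coe] at hb
    rcases hb with rfl | hb
    · obtain ⟨c, hc⟩ := id hB
      exact le_of_lt (lt_of_le_of_lt ((isLeast_sInf hB).2 hc) (hm c hc))
    · exact (isLeast_sInf hB).2 hb

/-- Base case: `famComb H G` splits into the part with minima in `famDeriv H` and `ASet H G 0`. -/
lemma famComb_eq_base {H G : Set (Finset ℕ)} :
    famComb H G = famComb (famDeriv H) G ∪ ASet H G 0 := by
  apply Set.Subset.antisymm
  · intro E hE
    rw [mem_famComb_iff] at hE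
    rcases hE with rfl | ⟨M, hdec, hM⟩
    · exact Or.inl (empty_mem_famComb _ _)
    rcases E.eq_empty_or_nonempty with rfl | hEne
    · exact Or.inl (empty_mem_famComb _ _)
    obtain ⟨D', B, M', h1, h2, h3, h4, h5, h6⟩ := hdec.unsnoc hEne
    refine Or.inr ⟨D', B, M', h1, h4, by simpa using h3, h5, h6, ?_⟩
    rw [← h2]; exact hM
  · rintro E (hE | ⟨D, B, M, rfl, hBne, hBG, hDB, hdec, hH⟩)
    · exact famComb_mono_left (famDeriv_subset H) hE
    · rw [mem_famComb_iff]
      refine Or.inr ⟨insert (sInf ↑B) M, hdec.snoc (by simpa using hBG) hBne hDB, hH⟩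

/-- Limit case of the core computation. -/
lemma ASet_limit {H G : Set (Finset ℕ)} {o : Ordinal} (ho : Order.IsSuccLimit o) :
    (⋂ (ζ : Ordinal) (_ : ζ < o), (famComb (famDeriv H) G ∪ ASet H G ζ)) =
      famComb (famDeriv H) G ∪ ASet H G o := by
  apply Set.Subset.antisymm
  · intro E hE
    simp only [Set.mem_iInter] at hE
    by_cases hEc : E ∈ famComb (famDeriv H) G
    · exact Or.inl hEc
    have hA : ∀ ζ < o, E ∈ ASet H G ζ := by
      intro ζ hζ
      rcases hE ζ hζ with h | h
      · exact absurd h hEc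
      · exact h
    -- pigeonhole over the finitely many possible witnesses
    set T : Finset (Finset ℕ × Finset ℕ × Finset ℕ) :=
      E.powerset ×ˢ (E.powerset ×ˢ E.powerset) with hT
    set P : Finset ℕ × Finset ℕ × Finset ℕ → Ordinal → Prop := fun c ζ =>
      E = c.1 ∪ c.2.1 ∧ c.2.1.Nonempty ∧ c.2.1 ∈ famIter G ζ ∧
      (∀ d ∈ c.1, ∀ b ∈ c.2.1, d < b) ∧ DecompMin G c.1 c.2.2 ∧
      insert (sInf ↑c.2.1) c.2.2 ∈ H with hP
    have hmono : ∀ c ζ' ζ, ζ' ≤ ζ → P c ζ → P c ζ' := by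
      rintro c ζ' ζ hle ⟨p1, p2, p3, p4, p5, p6⟩
      exact ⟨p1, p2, famIter_antitone G ζ ζ' hle p3, p4, p5, p6⟩
    have hex : ∀ ζ < o, ∃ c ∈ T, P c ζ := by
      intro ζ hζ
      obtain ⟨D, B, M, h1, h2, h3, h4, h5, h6⟩ := hA ζ hζ
      refine ⟨(D, B, M), ?_, h1, h2, h3, h4, h5, h6⟩
      simp only [hT, Finset.mem_product, Finset.mem_powerset]
      refine ⟨?_, ?_, ?_⟩
      · rw [h1]; exact Finset.subset_union_left
      · rw [h1]; exact Finset.subset_union_right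
      · exact h5.min_subset.trans (by rw [h1]; exact Finset.subset_union_left)
    obtain ⟨c, _, hc⟩ := pigeonhole_ord ho T P hmono hex
    refine Or.inr ⟨c.1, c.2.1, c.2.2, (hc 0 ho.pos).1, (hc 0 ho.pos).2.1, ?_,
      (hc 0 ho.pos).2.2.2.1, (hc 0 ho.pos).2.2.2.2.1, (hc 0 ho.pos).2.2.2.2.2⟩
    rw [famIter_limit G ho]
    simp only [Set.mem_iInter]
    exact fun ζ hζ => (hc ζ hζ).2.2.1
  · intro E hE
    simp only [Set.mem_iInter]
    intro ζ hζ
    rcases hE with h | h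
    · exact Or.inl h
    · exact Or.inr (ASet_antitone hζ.le h)

/-- Successor case of the core computation. -/
lemma ASet_succ {H G : Set (Finset ℕ)} (hHh : Hereditary H) (hHs : Spreading H)
    (hGh : Hereditary G) (hGs : Spreading G)
    (hHne : ∃ E ∈ H, E.Nonempty) (ξ : Ordinal) (hGξ : ∃ B ∈ famIter G ξ, B.Nonempty) :
    famDeriv (famComb (famDeriv H) G ∪ ASet H G ξ) =
      famComb (famDeriv H) G ∪ ASet H G (ξ + 1) := by
  classical
  obtain ⟨E₁, hE₁H, hE₁ne⟩ := hHne
  obtain ⟨B₁, hB₁G, hB₁ne⟩ := hGξ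
  obtain ⟨mH, hmH⟩ := singleton_mem_of_spreading hHh hHs hE₁H hE₁ne
  obtain ⟨mG, hmG⟩ := singleton_mem_of_spreading (famIter_hereditary hGh ξ)
    (famIter_spreading hGs ξ) hB₁G hB₁ne
  set U := famComb (famDeriv H) G ∪ ASet H G ξ with hU
  apply Set.Subset.antisymm
  · -- ⊆ : analyse an element of the derivative
    rintro E ⟨hEU, hinf⟩
    by_cases hEc : E ∈ famComb (famDeriv H) G
    · exact Or.inl hEc
    have hEA : E ∈ ASet H G ξ := by
      rcases hEU with h | h
      · exact absurd h hEc
      · exact h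
    set b₀ := E.sup id with hb₀
    have hEbound : ∀ e ∈ E, e ≤ b₀ := fun e he => Finset.le_sup (f := id) he
    set X : Set ℕ := {m | (m ∉ E ∧ insert m E ∈ U) ∧ b₀ < m} with hX
    have hXinf : X.Infinite := hinf.diff (Set.finite_Iic b₀) |>.mono
      (by intro m hm; obtain ⟨h1, h2⟩ := hm; exact ⟨h1, by simpa using h2⟩)
    by_cases hcase : ∃ m ∈ X, insert m E ∈ famComb (famDeriv H) G
    · -- E itself already has minima in the derivative
      obtain ⟨m, _, hm⟩ := hcase
      exact Or.inl ((famComb_hereditary (famDeriv_hereditary hHh) hGh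
        (famDeriv_spreading hHs)) (Finset.subset_insert m E) hm)
    push_neg at hcase
    have hXA : ∀ m ∈ X, insert m E ∈ ASet H G ξ := by
      intro m hm
      rcases hm.1.2 with h | h
      · exact absurd h (hcase m hm)
      · exact h
    -- witness extraction and pigeonhole
    have hwit : ∀ m ∈ X, ∃ c : Finset ℕ × Finset ℕ × Finset ℕ,
        (c.1 ⊆ E ∧ c.2.1 ⊆ E ∧ c.2.2 ⊆ E) ∧
        insert m E = c.1 ∪ insert m c.2.1 ∧ m ∉ c.2.1 ∧
        insert m c.2.1 ∈ famIter G ξ ∧ (∀ d ∈ c.1, ∀ b ∈ insert m c.2.1, d < b) ∧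
        DecompMin G c.1 c.2.2 ∧ insert (sInf ↑(insert m c.2.1)) c.2.2 ∈ H := by
      intro m hm
      obtain ⟨D, B, M, h1, h2, h3, h4, h5, h6⟩ := hXA m hm
      have hmE : m ∉ E := hm.1.1
      have hmb : b₀ < m := hm.2
      have hmax : ∀ e ∈ insert m E, e ≤ m := by
        intro e he
        rcases Finset.mem_insert.mp he with rfl | he
        · exact le_rfl
        · exact (hEbound e he).trans hmb.le
      have hmB : m ∈ B := by
        by_contra hmB
        have hmD : m ∈ D := by
          have : m ∈ insert m E := Finset.mem_insert_self m E
          rw [h1] at this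
          rcases Finset.mem_union.mp this with h | h
          · exact h
          · exact absurd h hmB
        obtain ⟨b, hb⟩ := h2
        have h7 := h4 m hmD b hb
        have : b ∈ insert m E := h1 ▸ Finset.mem_union_right _ hb
        exact absurd (hmax b this) (by omega)
      have hDE : D ⊆ E := by
        intro d hd
        have hdm : d < m := by
          obtain ⟨b, hb⟩ := h2
          have h7 := h4 d hd b hb
          have : b ∈ insert m E := h1 ▸ Finset.mem_union_right _ hb
          have := hmax b this
          omega
        have : d ∈ insert m E := h1 ▸ Finset.mem_union_left _ hd
        rcases Finset.mem_insert.mp this with rfl | h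
        · omega
        · exact h
      have hBm : B = insert m (B.erase m) := by
        rw [Finset.insert_erase hmB]
      have hBE : B.erase m ⊆ E := by
        intro b hb
        obtain ⟨hbm, hbB⟩ := Finset.mem_erase.mp hb
        have : b ∈ insert m E := h1 ▸ Finset.mem_union_right _ hbB
        rcases Finset.mem_insert.mp this with rfl | h
        · exact absurd rfl hbm
        · exact h
      refine ⟨(D, B.erase m, M), ⟨hDE, hBE, h5.min_subset.trans hDE⟩, by rw [h1, ← hBm],
        by simp, by rw [← hBm]; exact h3, by rw [← hBm]; exact h4, h5, by rw [← hBm]; exact h6⟩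
    set w : ℕ → Finset ℕ × Finset ℕ × Finset ℕ := fun m =>
      if hm : m ∈ X then (hwit m hm).choose else (∅, ∅, ∅) with hw
    have hwspec : ∀ m (hm : m ∈ X),
        ((w m).1 ⊆ E ∧ (w m).2.1 ⊆ E ∧ (w m).2.2 ⊆ E) ∧
        insert m E = (w m).1 ∪ insert m (w m).2.1 ∧ m ∉ (w m).2.1 ∧
        insert m (w m).2.1 ∈ famIter G ξ ∧ (∀ d ∈ (w m).1, ∀ b ∈ insert m (w m).2.1, d < b) ∧
        DecompMin G (w m).1 (w m).2.2 ∧ insert (sInf ↑(insert m (w m).2.1)) (w m).2.2 ∈ H := by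
      intro m hm
      have := (hwit m hm).choose_spec
      rw [hw]; simp only [dif_pos hm]
      exact this
    obtain ⟨c, hcT, hfib⟩ := pigeonhole_infinite hXinf
      (E.powerset ×ˢ (E.powerset ×ˢ E.powerset)) w
      (by
        intro m hm
        obtain ⟨⟨p1, p2, p3⟩, _⟩ := hwspec m hm
        simp only [Finset.mem_product, Finset.mem_powerset]
        exact ⟨p1, p2, p3⟩)
    obtain ⟨D', B₀, M'⟩ := c
    obtain ⟨m₁, hm₁⟩ := hfib.nonempty
    obtain ⟨hm₁X, hm₁w⟩ := hm₁
    have hspec₁ := hwspec m₁ hm₁X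
    rw [hm₁w] at hspec₁
    obtain ⟨⟨hD'E, hB₀E, hM'E⟩, heq₁, hm₁B₀, hB₀ξ, hord₁, hdec', hH₁⟩ := hspec₁
    have hEeq : E = D' ∪ B₀ := by
      have h1 : insert m₁ E = insert m₁ (D' ∪ B₀) := by
        rw [heq₁, Finset.union_insert]
      have hm₁E : m₁ ∉ E := hm₁X.1.1
      have hm₁DB : m₁ ∉ D' ∪ B₀ := by
        intro hc
        rcases Finset.mem_union.mp hc with h | h
        · exact hm₁E (hD'E h)
        · exact hm₁E (hB₀E h)
      have := congrArg (fun s => Finset.erase s m₁) h1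
      simpa [Finset.erase_insert hm₁E, Finset.erase_insert hm₁DB] using this
    rcases B₀.eq_empty_or_nonempty with rfl | hB₀ne
    · -- the new blocks were singletons: the minima set is in the derivative
      left
      have hD'eq : D' = E := by rw [hEeq]; simp
      have hM'H : M' ∈ H := hHh (Finset.subset_insert _ _) hH₁
      have hM'd : M' ∈ famDeriv H := by
        refine ⟨hM'H, ?_⟩
        apply hfib.mono
        rintro m ⟨hmX, hmw⟩
        have hspec := hwspec m hmX
        rw [hmw] at hspec
        obtain ⟨_, _, _, _, _, _, hmemH⟩ := hspec
        have hs : sInf (↑(insert m (∅ : Finset ℕ)) : Set ℕ) = m := by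
          simpa using sInf_singleton_fin m
        rw [hs] at hmemH
        refine ⟨fun hc => hmX.1.1 (hM'E hc), hmemH⟩
      rw [mem_famComb_iff]
      exact Or.inr ⟨M', hD'eq ▸ hdec', hM'd⟩
    · -- the last block got extended infinitely often
      right
      have hB₀mem : B₀ ∈ famIter G ξ :=
        (famIter_hereditary hGh ξ) (Finset.subset_insert m₁ B₀) hB₀ξ
      have hB₀d : B₀ ∈ famDeriv (famIter G ξ) := by
        refine ⟨hB₀mem, ?_⟩
        apply hfib.mono
        rintro m ⟨hmX, hmw⟩
        have hspec := hwspec m hmX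
        rw [hmw] at hspec
        exact ⟨fun hc => hmX.1.1 (hB₀E hc), hspec.2.2.2.1⟩
      have hsInfB₀ : sInf (↑(insert m₁ B₀) : Set ℕ) = sInf ↑B₀ := by
        apply sInf_insert_of_gt hB₀ne
        intro b hb
        exact lt_of_le_of_lt (hEbound b (hB₀E hb)) hm₁X.2
      refine ⟨D', B₀, M', hEeq, hB₀ne, ?_, ?_, hdec', ?_⟩
      · rw [famIter_succ]; exact hB₀d
      · intro d hd b hb
        exact hord₁ d hd b (Finset.mem_insert_of_mem hb)
      · rw [← hsInfB₀]; exact hH₁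
  · -- ⊇ : both parts consist of cluster points
    rintro E (hE | ⟨D, B, M, rfl, hBne, hBd, hDB, hdec, hH⟩)
    · -- part (a): elements with minima in the derivative
      refine ⟨Or.inl hE, ?_⟩
      rw [mem_famComb_iff] at hE
      rcases hE with rfl | ⟨M, hdec, hMd⟩
      · -- E = ∅
        apply infinite_of_unbounded
        intro N
        refine ⟨N + mH + mG, by omega, by simp, Or.inr ?_⟩
        refine ⟨∅, {N + mH + mG}, ∅, by simp, Finset.singleton_nonempty _,
          hmG _ (by omega), by simp, DecompMin.nil G, ?_⟩
        rw [sInf_singleton_fin]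
        simpa using hmH _ (by omega)
      · -- E ≠ ∅, with minima M ∈ famDeriv H
        obtain ⟨hMH, hMinf⟩ := hMd
        apply infinite_of_unbounded
        intro N
        set b₀ := E.sup id with hb₀
        obtain ⟨m, hm⟩ := hMinf.exists_gt (N + b₀ + mG)
        obtain ⟨⟨hmM, hmMH⟩, hmbig⟩ := hm
        have hmE : m ∉ E := by
          intro hc
          have : m ≤ b₀ := Finset.le_sup (f := id) hc
          omega
        refine ⟨m, by omega, hmE, Or.inr ?_⟩
        refine ⟨E, {m}, M, by rw [Finset.union_comm]; simp [Finset.insert_eq, -Finset.singleton_union],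
          Finset.singleton_nonempty _, hmG _ (by omega), ?_, hdec, ?_⟩
        · intro d hd b hb
          simp only [Finset.mem_singleton] at hb
          subst hb
          have : d ≤ b₀ := Finset.le_sup (f := id) hd
          omega
        · rw [sInf_singleton_fin]
          exact hmMH
    · -- part (b): elements of `ASet H G (ξ+1)`
      rw [famIter_succ] at hBd
      obtain ⟨hBξ, hBinf⟩ := hBd
      constructor
      · exact Or.inr ⟨D, B, M, rfl, hBne, hBξ, hDB, hdec, hH⟩
      · apply infinite_of_unbounded
        intro N
        set b₀ := (D ∪ B).sup id with hb₀
        obtain ⟨m, hm⟩ := hBinf.exists_gt (N + b₀)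
        obtain ⟨⟨hmB, hmBH⟩, hmbig⟩ := hm
        have hbound : ∀ e ∈ D ∪ B, e ≤ b₀ := fun e he => Finset.le_sup (f := id) he
        have hmDB : m ∉ D ∪ B := by
          intro hc
          have := hbound m hc
          omega
        refine ⟨m, by omega, hmDB, Or.inr ?_⟩
        refine ⟨D, insert m B, M, by rw [Finset.union_insert, Finset.insert_eq,
            Finset.union_comm {m} _], Finset.insert_nonempty m B, hmBH, ?_, hdec, ?_⟩
        · intro d hd b hb
          rcases Finset.mem_insert.mp hb with rfl | hb
          · have : d ≤ b₀ := hbound d (Finset.mem_union_left _ hd)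
            omega
          · exact hDB d hd b hb
        · rw [sInf_insert_of_gt hBne]
          · exact hH
          · intro b hb
            have : b ≤ b₀ := hbound b (Finset.mem_union_right _ hb)
            omega

lemma stage_nonempty {G : Set (Finset ℕ)} {α : Ordinal} (hGα : famIter G α = {(∅ : Finset ℕ)})
    {ζ : Ordinal} (hζ : ζ < α) : ∃ B ∈ famIter G ζ, B.Nonempty := by
  by_contra hcon
  push_neg at hcon
  have hsub : famIter G ζ ⊆ {(∅ : Finset ℕ)} := by
    intro B hB
    have := hcon B hB
    simp [this]
  have h1 : famIter G (ζ + 1) = ∅ := by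
    rw [famIter_succ]
    apply Set.eq_empty_of_subset_empty
    calc famDeriv (famIter G ζ) ⊆ famDeriv {(∅ : Finset ℕ)} := famDeriv_mono hsub
      _ = ∅ := famDeriv_singleton_empty
  have h2 : famIter G α ⊆ famIter G (ζ + 1) := by
    apply famIter_antitone
    rwa [Ordinal.add_one_eq_succ, Order.succ_le_iff]
  rw [hGα, h1] at h2
  exact h2 rfl

lemma ASet_top {H G : Set (Finset ℕ)} {α : Ordinal} (hGα : famIter G α = {(∅ : Finset ℕ)}) :
    ASet H G α = ∅ := by
  apply Set.eq_empty_of_subset_empty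
  rintro E ⟨D, B, M, _, hBne, hBα, _⟩
  rw [hGα] at hBα
  simp only [Set.mem_singleton_iff] at hBα
  subst hBα
  simp at hBne

/-- The core computation: iterating the derivative `α` times on `famComb H G` replaces the
minima family `H` by its derivative. -/
lemma core_lemma {H G : Set (Finset ℕ)} (hHh : Hereditary H) (hHs : Spreading H)
    (hGh : Hereditary G) (hGs : Spreading G) (hHne : ∃ E ∈ H, E.Nonempty)
    {α : Ordinal} (hGα : famIter G α = {(∅ : Finset ℕ)}) :
    ∀ ξ ≤ α, famIter (famComb H G) ξ = famComb (famDeriv H) G ∪ ASet H G ξ := by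
  intro ξ
  induction ξ using Ordinal.induction with
  | h ξ ih =>
    intro hξα
    rcases Ordinal.zero_or_succ_or_isSuccLimit ξ with rfl | ⟨ζ, rfl⟩ | hlim
    · rw [famIter_zero]
      exact famComb_eq_base
    · rw [show Order.succ ζ = ζ + 1 from (Ordinal.add_one_eq_succ ζ).symm] at *
      have hζα : ζ < α := lt_of_lt_of_le (Order.lt_succ_of_not_isMax (by simp))
        (by rwa [← Ordinal.add_one_eq_succ])
      rw [famIter_succ, ih ζ (Order.lt_succ_of_not_isMax (by simp)) hζα.le]
      exact ASet_succ hHh hHs hGh hGs hHne ζ (stage_nonempty hGα hζα)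
    · rw [famIter_limit _ hlim, ← ASet_limit (H := H) (G := G) hlim]
      ext E
      simp only [Set.mem_iInter]
      constructor
      · intro h ζ hζ
        rw [← ih ζ hζ (hζ.le.trans hξα)]
        exact h ζ hζ
      · intro h ζ hζ
        rw [ih ζ hζ (hζ.le.trans hξα)]
        exact h ζ hζ

lemma famComb_empty_right {F : Set (Finset ℕ)} : famComb F {(∅ : Finset ℕ)} = {∅} := by
  apply Set.Subset.antisymm
  · rintro E (rfl | ⟨n, Es, mins, hGne, _, _, _, rfl⟩)
    · rfl
    · cases n with
      | zero =>
        have : Finset.univ.biUnion Es = ∅ := by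
          apply Finset.eq_empty_of_forall_notMem
          intro x hx
          obtain ⟨i, _, _⟩ := Finset.mem_biUnion.mp hx
          exact i.elim0
        rw [this]
        rfl
      | succ n' =>
        exfalso
        have := hGne 0
        rw [Set.mem_singleton_iff] at this
        obtain ⟨h1, h2⟩ := this
        rw [h1] at h2
        simp at h2
  · rintro E rfl
    exact empty_mem_famComb _ _

/-- The master identity. -/
lemma master_lemma {F G : Set (Finset ℕ)} (hFh : Hereditary F) (hFs : Spreading F)
    (hGh : Hereditary G) (hGs : Spreading G) {α β : Ordinal}
    (hGα : famIter G α = {(∅ : Finset ℕ)}) (hFβ : famIter F β = {(∅ : Finset ℕ)}) :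
    ∀ ξ ≤ β, famIter (famComb F G) (α * ξ) = famComb (famIter F ξ) G := by
  rcases eq_or_lt_of_le (zero_le : (0 : Ordinal) ≤ α) with rfl | hα
  · -- α = 0 : G = {∅}
    have hG : G = {(∅ : Finset ℕ)} := by rw [← famIter_zero G]; exact hGα
    subst hG
    intro ξ _
    rw [zero_mul, famIter_zero, famComb_empty_right, famComb_empty_right]
  intro ξ
  induction ξ using Ordinal.induction with
  | h ξ ih =>
    intro hξβ
    rcases Ordinal.zero_or_succ_or_isSuccLimit ξ with rfl | ⟨ζ, rfl⟩ | hlim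
    · rw [mul_zero, famIter_zero, famIter_zero]
    · rw [show Order.succ ζ = ζ + 1 from (Ordinal.add_one_eq_succ ζ).symm] at *
      have hζβ : ζ < β := lt_of_lt_of_le (Order.lt_succ_of_not_isMax (by simp))
        (by rwa [← Ordinal.add_one_eq_succ])
      rw [mul_add, mul_one, famIter_add, ih ζ (Order.lt_succ_of_not_isMax (by simp)) hζβ.le]
      rw [core_lemma (famIter_hereditary hFh ζ) (famIter_spreading hFs ζ) hGh hGs
        (stage_nonempty hFβ hζβ) hGα α le_rfl]
      rw [ASet_top hGα, Set.union_empty, ← famIter_succ]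
    · have holim : Order.IsSuccLimit (α * ξ) := Ordinal.isSuccLimit_mul_right hα hlim
      rw [famIter_limit _ holim]
      apply Set.Subset.antisymm
      · intro x hx
        simp only [Set.mem_iInter] at hx
        have hζ : ∀ ζ < ξ, x ∈ famComb (famIter F ζ) G := by
          intro ζ hζξ
          rw [← ih ζ hζξ (hζξ.le.trans hξβ)]
          exact hx (α * ζ) (mul_lt_mul_of_pos_left hζξ hα)
        rcases x.eq_empty_or_nonempty with rfl | hxne
        · exact empty_mem_famComb _ _
        have hM : ∀ ζ < ξ, ∃ M ∈ x.powerset, DecompMin G x M ∧ M ∈ famIter F ζ := by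
          intro ζ hζξ
          have := hζ ζ hζξ
          rw [mem_famComb_iff] at this
          rcases this with rfl | ⟨M, h1, h2⟩
          · exact absurd rfl (Finset.nonempty_iff_ne_empty.mp hxne)
          · exact ⟨M, Finset.mem_powerset.mpr (h1.min_subset.trans
              (by rintro d hd; exact hd)), h1, h2⟩
        obtain ⟨M, _, hMall⟩ := pigeonhole_ord hlim x.powerset
          (fun M ζ => DecompMin G x M ∧ M ∈ famIter F ζ)
          (fun M ζ' ζ hle ⟨h1, h2⟩ => ⟨h1, famIter_antitone F ζ ζ' hle h2⟩) hM
        rw [mem_famComb_iff]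
        refine Or.inr ⟨M, (hMall 0 hlim.pos).1, ?_⟩
        rw [famIter_limit F hlim]
        simp only [Set.mem_iInter]
        exact fun ζ hζξ => (hMall ζ hζξ).2
      · intro x hx
        simp only [Set.mem_iInter]
        intro η hη
        obtain ⟨ζ, hζξ, hηζ⟩ := (Ordinal.lt_mul_iff_of_isSuccLimit hlim).mp hη
        apply famIter_antitone _ _ _ hηζ.le
        rw [ih ζ hζξ (hζξ.le.trans hξβ)]
        apply famComb_mono_left _ hx
        exact famIter_antitone F ξ ζ hζξ.le

/-- For nonempty regular families `ℱ, 𝒢`, the family `ℱ[𝒢]` is regular; moreover if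
`CB(ℱ) = β+1` and `CB(𝒢) = α+1` then `CB(ℱ[𝒢]) = α·β + 1`. -/
theorem famComb_regular_and_CB (F G : Set (Finset ℕ))
    (hF : IsRegularFam F) (hG : IsRegularFam G) (hFne : F.Nonempty) (hGne : G.Nonempty) :
    IsRegularFam (famComb F G) ∧
    ∀ α β : Ordinal,
      cbIter (toCantor '' F) (β + 1) = ∅ → cbIter (toCantor '' F) β ≠ ∅ →
      cbIter (toCantor '' G) (α + 1) = ∅ → cbIter (toCantor '' G) α ≠ ∅ →
      cbIter (toCantor '' famComb F G) (α * β + 1) = ∅ ∧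
        cbIter (toCantor '' famComb F G) (α * β) ≠ ∅ := by
  obtain ⟨hFc, hFh, hFs⟩ := hF
  obtain ⟨hGc, hGh, hGs⟩ := hG
  have hcomb_h : Hereditary (famComb F G) := famComb_hereditary hFh hGh hFs
  refine ⟨⟨famComb_compact ⟨hFc, hFh, hFs⟩ ⟨hGc, hGh, hGs⟩ hFne, hcomb_h,
    famComb_spreading hFs hGs⟩, ?_⟩
  intro α β h1 h2 h3 h4
  -- translate the hypotheses into the combinatorial language
  rw [cbIter_image hFh] at h1 h2
  rw [cbIter_image hGh] at h3 h4
  rw [Set.image_eq_empty] at h1 h3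
  have h2' : (famIter F β).Nonempty := by
    rcases (famIter F β).eq_empty_or_nonempty with h | h
    · exact absurd (by rw [h]; simp) h2
    · exact h
  have h4' : (famIter G α).Nonempty := by
    rcases (famIter G α).eq_empty_or_nonempty with h | h
    · exact absurd (by rw [h]; simp) h4
    · exact h
  rw [famIter_succ] at h1 h3
  have hFβ : famIter F β = {(∅ : Finset ℕ)} :=
    eq_singleton_empty (famIter_hereditary hFh β) (famIter_spreading hFs β) h2'
      (Set.eq_empty_of_subset_empty (h1 ▸ le_rfl))
  have hGα : famIter G α = {(∅ : Finset ℕ)} :=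
    eq_singleton_empty (famIter_hereditary hGh α) (famIter_spreading hGs α) h4'
      (Set.eq_empty_of_subset_empty (h3 ▸ le_rfl))
  have hmaster : famIter (famComb F G) (α * β) = {(∅ : Finset ℕ)} := by
    rw [master_lemma hFh hFs hGh hGs hGα hFβ β le_rfl, hFβ, famComb_empty_left]
  constructor
  · rw [cbIter_image hcomb_h, Set.image_eq_empty, famIter_succ, hmaster,
      famDeriv_singleton_empty]
  · rw [cbIter_image hcomb_h, hmaster]
    intro hc
    rw [Set.image_eq_empty] at hc
    exact absurd hc (by simp)
end

section
/- If ℱ is a regular family of finite subsets of ℕ and M = (m₁ < m₂ < ⋯) is an infinite subset of ℕ, then ℱ(M⁻¹) := {E finite : (m_n)_{n∈E} ∈ ℱ} is regular and has the same Cantor–Bendixson index as ℱ. -/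
/-- For an infinite `M ⊆ ℕ` with increasing enumeration `(mₙ)`, the family
`ℱ(M⁻¹) = {E : (mₙ)_{n ∈ E} ∈ ℱ}`. -/
def famPre (F : Set (Finset ℕ)) (M : Set ℕ) : Set (Finset ℕ) :=
  {E : Finset ℕ | E.image (Nat.nth (· ∈ M)) ∈ F}

section Aux

open Topology

variable {α β : Type*} [TopologicalSpace α] [TopologicalSpace β]

theorem cbIter_zero (K : Set α) : cbIter K 0 = K :=
  Ordinal.limitRecOn_zero ..

theorem cbIter_succ (K : Set α) (o : Ordinal) :
    cbIter K (Order.succ o) = cbDeriv (cbIter K o) :=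
  Ordinal.limitRecOn_succ ..

theorem cbIter_limit (K : Set α) {o : Ordinal} (h : Order.IsSuccLimit o) :
    cbIter K o = ⋂ (ζ : Ordinal) (_ : ζ < o), cbIter K ζ :=
  Ordinal.limitRecOn_limit _ _ _ _ h

theorem cbDeriv_mono {S T : Set α} (h : S ⊆ T) : cbDeriv S ⊆ cbDeriv T := fun x hx =>
  ⟨h hx.1, closure_mono (Set.diff_subset_diff_left h) hx.2⟩

theorem cbIter_mono {S T : Set α} (h : S ⊆ T) (ξ : Ordinal) : cbIter S ξ ⊆ cbIter T ξ := by
  induction ξ using Ordinal.limitRecOn with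
  | zero => rw [cbIter_zero, cbIter_zero]; exact h
  | add_one o ih => rw [← Order.succ_eq_add_one, cbIter_succ, cbIter_succ]; exact cbDeriv_mono ih
  | limit o ho ih =>
      rw [cbIter_limit _ ho, cbIter_limit _ ho]
      exact Set.iInter₂_mono ih

theorem cbDeriv_image_s5 {e : α → β} (he : IsClosedEmbedding e) (T : Set α) :
    cbDeriv (e '' T) = e '' cbDeriv T := by
  have key : ∀ x : α, e '' T \ {e x} = e '' (T \ {x}) := fun x => by
    rw [Set.image_diff he.injective, Set.image_singleton]
  ext y
  constructor
  · rintro ⟨⟨x, hxT, rfl⟩, hy⟩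
    refine ⟨x, ⟨hxT, ?_⟩, rfl⟩
    rw [key, he.closure_image_eq] at hy
    obtain ⟨z, hz, hez⟩ := hy
    rwa [he.injective hez] at hz
  · rintro ⟨x, ⟨hxT, hx⟩, rfl⟩
    refine ⟨⟨x, hxT, rfl⟩, ?_⟩
    rw [key, he.closure_image_eq]
    exact ⟨x, hx, rfl⟩

theorem cbIter_image_s5 {e : α → β} (he : IsClosedEmbedding e) (S : Set α) (ξ : Ordinal) :
    cbIter (e '' S) ξ = e '' cbIter S ξ := by
  induction ξ using Ordinal.limitRecOn with
  | zero => rw [cbIter_zero, cbIter_zero]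
  | add_one o ih => rw [← Order.succ_eq_add_one, cbIter_succ, cbIter_succ, ih, cbDeriv_image_s5 he]
  | limit o ho ih =>
      rw [cbIter_limit _ ho, cbIter_limit _ ho, Set.iInter₂_congr ih]
      ext y
      simp only [Set.mem_iInter, Set.mem_image]
      constructor
      · intro h
        obtain ⟨x0, hx0, rfl⟩ := h 0 ho.pos
        refine ⟨x0, fun ζ hζ => ?_, rfl⟩
        obtain ⟨x, hx, hex⟩ := h ζ hζ
        rwa [← he.injective hex]
      · rintro ⟨x, hx, rfl⟩ ζ hζ
        exact ⟨x, hx ζ hζ, rfl⟩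

end Aux

/-- If `ℱ` is regular and `M ⊆ ℕ` is infinite, then `ℱ(M⁻¹)` is regular and has the
same Cantor–Bendixson index as `ℱ`. -/
theorem famPre_regular_CB (F : Set (Finset ℕ)) (hF : IsRegularFam F)
    (M : Set ℕ) (hM : M.Infinite) :
    IsRegularFam (famPre F M) ∧
    ∀ ξ : Ordinal,
      cbIter (toCantor '' F) ξ = ∅ ↔ cbIter (toCantor '' famPre F M) ξ = ∅ := by
  classical
  obtain ⟨hFc, hFh, hFs⟩ := hF
  set p : ℕ → Prop := (· ∈ M) with hp
  have hMinf : (setOf p).Infinite := hM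
  have hnotfin : ∀ (n : ℕ) (hf : (setOf p).Finite), n < hf.toFinset.card :=
    fun n hf => absurd hf hMinf
  set m : ℕ → ℕ := Nat.nth p with hm
  have hmono : StrictMono m := Nat.nth_strictMono hMinf
  have hle : ∀ n, n ≤ m n := fun n => Nat.le_nth (hnotfin n)
  have hcount : ∀ n, Nat.count p (m n) = n := fun n => Nat.count_nth (hnotfin n)
  have hmem : ∀ n, p (m n) := fun n => Nat.nth_mem_of_infinite hMinf n
  -- membership in famPre
  have hfam : ∀ E : Finset ℕ, E ∈ famPre F M ↔ E.image m ∈ F := fun E => Iff.rfl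
  -- the transfer map on Cantor space
  set Φ : (ℕ → Bool) → (ℕ → Bool) := fun x k => decide (p k) && x (Nat.count p k) with hΦ
  have hΦm : ∀ (x : ℕ → Bool) (n : ℕ), Φ x (m n) = x n := by
    intro x n
    simp [hΦ, hmem n, hcount n]
  have hΦinj : Function.Injective Φ := by
    intro x y h
    funext n
    rw [← hΦm x n, ← hΦm y n, h]
  have hΦcont : Continuous Φ := by
    apply continuous_pi
    intro k
    exact (continuous_of_discreteTopology (f := fun b => decide (p k) && b)).comp
      (continuous_apply (Nat.count p k))
  have hΦto : ∀ E : Finset ℕ, Φ (toCantor E) = toCantor (E.image m) := by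
    intro E
    funext k
    by_cases hk : p k
    · have hkm : m (Nat.count p k) = k := Nat.nth_count hk
      have hiff : Nat.count p k ∈ E ↔ k ∈ Finset.image m E := by
        constructor
        · intro h
          exact Finset.mem_image.2 ⟨_, h, hkm⟩
        · intro h
          obtain ⟨n, hn, hnk⟩ := Finset.mem_image.1 h
          have hne : n = Nat.count p k := hmono.injective (by rw [hnk, hkm])
          rwa [← hne]
      simp [hΦ, toCantor, hk, hiff]
    · have hnot : k ∉ Finset.image m E := by
        intro h
        obtain ⟨n, _, rfl⟩ := Finset.mem_image.1 h
        exact hk (hmem n)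
      simp [hΦ, toCantor, hk, hnot]
  have htoinj : Function.Injective toCantor := by
    intro E E' h
    ext n
    have := congrFun h n
    simpa [toCantor] using this
  have hpre : Φ ⁻¹' (toCantor '' F) = toCantor '' famPre F M := by
    ext x
    constructor
    · rintro ⟨G, hG, hxG⟩
      have hx : ∀ n, x n = toCantor G (m n) := fun n => by rw [hxG, hΦm]
      set E : Finset ℕ := G.preimage m (Set.injOn_of_injective hmono.injective) with hE
      have hxE : x = toCantor E := by
        funext n
        rw [hx n]
        simp [toCantor, hE, Finset.mem_preimage]
      have himg : E.image m ∈ F := by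
        have h1 : toCantor (E.image m) = toCantor G := by
          rw [← hΦto, ← hxE, hxG]
        rwa [htoinj h1]
      exact ⟨E, (hfam E).2 himg, hxE.symm⟩
    · rintro ⟨E, hE, rfl⟩
      exact ⟨E.image m, (hfam E).1 hE, (hΦto E).symm⟩
  -- compactness
  have hKclosed : IsClosed (toCantor '' F) := hFc.isClosed
  have hK'closed : IsClosed (toCantor '' famPre F M) := by
    rw [← hpre]
    exact hKclosed.preimage hΦcont
  have hK'comp : IsCompact (toCantor '' famPre F M) := hK'closed.isCompact
  -- hereditary
  have hhered : Hereditary (famPre F M) := by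
    intro E E' hsub hE'
    exact (hfam E).2 (hFh (Finset.image_subset_image hsub) ((hfam E').1 hE'))
  -- spreading
  have hspread : Spreading (famPre F M) := by
    intro E f hf hfle hE
    rw [hfam] at hE ⊢
    set g : ℕ → ℕ := fun k => m (f (Nat.count p k)) with hg
    have hgm : ∀ n, g (m n) = m (f n) := fun n => by rw [hg]; simp [hcount n]
    have h1 : StrictMonoOn g ↑(E.image m) := by
      rintro a ha b hb hab
      simp only [Finset.coe_image, Set.mem_image, Finset.mem_coe] at ha hb
      obtain ⟨k, hk, rfl⟩ := ha
      obtain ⟨l, hl, rfl⟩ := hb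
      rw [hgm, hgm]
      exact hmono (hf hk hl (hmono.lt_iff_lt.1 hab))
    have h2 : ∀ n ∈ E.image m, n ≤ g n := by
      intro n hn
      obtain ⟨k, hk, rfl⟩ := Finset.mem_image.1 hn
      rw [hgm]
      exact hmono.monotone (hfle k hk)
    have h3 := hFs (E.image m) g h1 h2 hE
    rw [Finset.image_image] at h3
    rw [Finset.image_image]
    have : (g ∘ m) = (m ∘ f) := funext fun n => hgm n
    rwa [this] at h3
  -- embedding
  have hΦemb : Topology.IsClosedEmbedding Φ := hΦcont.isClosedEmbedding hΦinj
  -- F ⊆ famPre F M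
  have hsub : toCantor '' F ⊆ toCantor '' famPre F M := by
    apply Set.image_mono
    intro E hE
    exact (hfam E).2 (hFs E m (hmono.strictMonoOn _) (fun n _ => hle n) hE)
  refine ⟨⟨hK'comp, hhered, hspread⟩, fun ξ => ⟨fun h => ?_, fun h => ?_⟩⟩
  · have h1 : Φ '' (toCantor '' famPre F M) ⊆ toCantor '' F := by
      rw [← hpre]
      exact Set.image_preimage_subset _ _
    have h2 : Φ '' cbIter (toCantor '' famPre F M) ξ ⊆ cbIter (toCantor '' F) ξ := by
      rw [← cbIter_image_s5 hΦemb]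
      exact cbIter_mono h1 ξ
    rw [h] at h2
    exact Set.image_eq_empty.1 (Set.subset_empty_iff.1 h2)
  · have := cbIter_mono hsub ξ
    rw [h] at this
    exact Set.subset_empty_iff.1 this
end
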